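/- arXiv:2512.07736 — 6 statements merged into one kernel-verified Lean document; each statement's English description precedes it below -/
import Mathlib

section
/- Let (X, 𝓜, μ) be a measure space equipped with a doubling and regular ball-basis 𝔅 (with constants 𝒦, η, θ). Then there exists an admissible constant γ > 2 with the following property: for every 0 < ε < 1, setting α = 1 − εθ/(4γ²𝒦), every function g : X → ℝ (possibly non-measurable) with ‖g‖_{BMO_α} := sup_{B∈𝔅} OSC_{B,α}(g) < ∞ satisfies: for every ball B ∈ 𝔅 and every λ > 0 with μ*({x ∈ B : |g(x)| > λ}) ≤ (θ/(5𝒦γ²)) · μ(B), one has μ*({x ∈ B : |g(x)| > λ + ‖g‖_{BMO_α}}) ≤ ε · μ*({x ∈ B : |g(x)| > λ}). -/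
open MeasureTheory Set
open scoped ENNReal NNReal symmDiff

variable {X : Type*}

structure IsBallBasis [MeasurableSpace X] (μ : Measure X) (𝔅 : Set (Set X))
    (hull : Set X → Set X) (K : ℝ) : Prop where
  measurableSet : ∀ B ∈ 𝔅, MeasurableSet B
  measure_pos : ∀ B ∈ 𝔅, 0 < μ B
  measure_lt_top : ∀ B ∈ 𝔅, μ B < ∞
  exists_ball : ∀ x y : X, ∃ B ∈ 𝔅, x ∈ B ∧ y ∈ B
  approx : ∀ E : Set X, MeasurableSet E → ∀ ε : ℝ≥0∞, 0 < ε →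
    ∃ 𝒞 ⊆ 𝔅, 𝒞.Countable ∧ μ (E ∆ ⋃₀ 𝒞) < ε
  hull_mem : ∀ B ∈ 𝔅, hull B ∈ 𝔅
  hull_measure : ∀ B ∈ 𝔅, μ (hull B) ≤ ENNReal.ofReal K * μ B
  subset_hull : ∀ B ∈ 𝔅, ∀ A ∈ 𝔅, μ A ≤ 2 * μ B → (A ∩ B).Nonempty → A ⊆ hull B

def IsDoublingBasis [MeasurableSpace X] (μ : Measure X) (𝔅 : Set (Set X))
    (hull : Set X → Set X) (η : ℝ) : Prop :=
  ∀ B ∈ 𝔅, hull B ≠ Set.univ →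
    ∃ B' ∈ 𝔅, B ⊆ B' ∧ 2 * μ B ≤ μ B' ∧ μ B' ≤ ENNReal.ofReal η * μ B

def IsRegularBasis [MeasurableSpace X] (μ : Measure X) (𝔅 : Set (Set X))
    (hull : Set X → Set X) (θ : ℝ) : Prop :=
  ∀ A ∈ 𝔅, ∀ B ∈ 𝔅, μ B ≤ μ A → (B ∩ A).Nonempty →
    ENNReal.ofReal θ * μ (hull B) ≤ μ (hull B ∩ A)

/-- The mean `f_B` of `f` over a set `B`. -/
noncomputable def mean [MeasurableSpace X] (μ : Measure X) (f : X → ℝ) (B : Set X) : ℝ :=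
  (∫ x in B, f x ∂μ) / (μ B).toReal

/-- `⟨f⟩_B`, the `L^r` average of `f` over `B`, valued in `ℝ≥0∞`. -/
noncomputable def avgNorm [MeasurableSpace X] (μ : Measure X) (r : ℝ) (f : X → ℝ) (B : Set X) :
    ℝ≥0∞ :=
  ((∫⁻ x in B, ENNReal.ofReal |f x| ^ r ∂μ) / μ B) ^ (1 / r)

/-- `⟨f⟩_{#,B}`. -/
noncomputable def sharpNorm [MeasurableSpace X] (μ : Measure X) (r : ℝ) (f : X → ℝ) (B : Set X) :
    ℝ≥0∞ :=
  avgNorm μ r (fun x => f x - mean μ f B) B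

/-- `⟨f⟩*_{#,B}`. -/
noncomputable def sharpStar [MeasurableSpace X] (μ : Measure X) (𝔅 : Set (Set X)) (r : ℝ)
    (f : X → ℝ) (B : Set X) : ℝ≥0∞ :=
  ⨆ (A : Set X) (_ : A ∈ 𝔅 ∧ B ⊆ A), sharpNorm μ r f A

/-- `⟨f⟩*_B`. -/
noncomputable def avgStar [MeasurableSpace X] (μ : Measure X) (𝔅 : Set (Set X)) (r : ℝ)
    (f : X → ℝ) (B : Set X) : ℝ≥0∞ :=
  ⨆ (A : Set X) (_ : A ∈ 𝔅 ∧ B ⊆ A), avgNorm μ r f A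

/-- essential oscillation `OSC_E(f)` of a measurable function. -/
noncomputable def oscE [MeasurableSpace X] (μ : Measure X) (f : X → ℝ) (E : Set X) : ℝ≥0∞ :=
  essSup (fun p : X × X => ENNReal.ofReal |f p.1 - f p.2|) ((μ.restrict E).prod (μ.restrict E))

/-- pointwise oscillation `sup_{x,x'∈E} |g x − g x'|` of an arbitrary function. -/
noncomputable def oscSup (g : X → ℝ) (E : Set X) : ℝ≥0∞ :=
  ⨆ (x : X) (_ : x ∈ E) (y : X) (_ : y ∈ E), ENNReal.ofReal |g x - g y|

/-- `OSC_{B,β}(g)` for a possibly non-measurable `g`. -/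
noncomputable def oscBeta [MeasurableSpace X] (μ : Measure X) (g : X → ℝ) (B : Set X) (β : ℝ) :
    ℝ≥0∞ :=
  ⨅ (E : Set X) (_ : MeasurableSet E ∧ E ⊆ B ∧ ENNReal.ofReal β * μ B < μ E), oscSup g E

/-- `OSC_{B,α}(f)` for measurable `f` (essential-oscillation version). -/
noncomputable def oscAlpha [MeasurableSpace X] (μ : Measure X) (f : X → ℝ) (B : Set X) (α : ℝ) :
    ℝ≥0∞ :=
  ⨅ (E : Set X) (_ : MeasurableSet E ∧ E ⊆ B ∧ ENNReal.ofReal α * μ B < μ E), oscE μ f E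

/-- the `L^r` norm. -/
noncomputable def lrNorm [MeasurableSpace X] (μ : Measure X) (r : ℝ) (f : X → ℝ) : ℝ≥0∞ :=
  (∫⁻ x, ENNReal.ofReal |f x| ^ r ∂μ) ^ (1 / r)

/-- membership in `L^r(X)`. -/
def MemLr [MeasurableSpace X] (μ : Measure X) (r : ℝ) (f : X → ℝ) : Prop :=
  AEMeasurable f μ ∧ lrNorm μ r f < ∞

/-- the weak `L^{r,∞}` (outer-measure) quasinorm of a possibly non-measurable function. -/
noncomputable def wnorm [MeasurableSpace X] (μ : Measure X) (r : ℝ) (g : X → ℝ) : ℝ≥0∞ :=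
  ⨆ (t : ℝ) (_ : 0 < t), ENNReal.ofReal t * μ {x | t < |g x|} ^ (1 / r)

/-- `‖T‖_{L^r → L^{r,∞}}`. -/
noncomputable def opWeakNorm [MeasurableSpace X] (μ : Measure X) (r : ℝ)
    (T : (X → ℝ) → X → ℝ) : ℝ≥0∞ :=
  ⨆ (f : X → ℝ) (_ : MemLr μ r f ∧ lrNorm μ r f ≠ 0), wnorm μ r (T f) / lrNorm μ r f

/-- `T` is a `BO_ω` operator with constant `L`. -/
def IsBO [MeasurableSpace X] (μ : Measure X) (𝔅 : Set (Set X)) (hull : Set X → Set X)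
    (r : ℝ) (ω : ℝ → ℝ) (T : (X → ℝ) → X → ℝ) (L : ℝ≥0∞) : Prop :=
  (∀ f g : X → ℝ, MemLr μ r f → MemLr μ r g →
      ∀ᵐ x ∂μ, |T (f + g) x| ≤ |T f x| + |T g x|) ∧
  ∀ f : X → ℝ, MemLr μ r f → ∀ B ∈ 𝔅,
    oscE μ (T (Set.indicator (hull B)ᶜ f)) B ≤
      L * ⨆ (A : Set X) (_ : A ∈ 𝔅 ∧ B ⊆ A),
        ENNReal.ofReal (ω ((μ A).toReal / (μ B).toReal)) * avgNorm μ r f A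

/-- `T` is linear on `L^r` (a.e.). -/
def IsLinearOnLr [MeasurableSpace X] (μ : Measure X) (r : ℝ) (T : (X → ℝ) → X → ℝ) : Prop :=
  (∀ f g : X → ℝ, MemLr μ r f → MemLr μ r g →
      ∀ᵐ x ∂μ, T (f + g) x = T f x + T g x) ∧
  (∀ (c : ℝ) (f : X → ℝ), MemLr μ r f → ∀ᵐ x ∂μ, T (c • f) x = c * T f x)

/-- a family of operators is uniformly vanishing. -/
def UniformlyVanishing {ι : Type*} [MeasurableSpace X] (μ : Measure X) (𝔅 : Set (Set X))
    (T : ι → (X → ℝ) → X → ℝ) : Prop :=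
  ∀ B ∈ 𝔅, ∀ ε : ℝ, 0 < ε → ∃ B' ∈ 𝔅, B ⊆ B' ∧
    ∀ α, ∀ B'' ∈ 𝔅, B' ⊆ B'' →
      oscE μ (T α (Set.indicator B'' fun _ => (1 : ℝ))) B ≤ ENNReal.ofReal ε
section Aux

variable [MeasurableSpace X] {μ : Measure X} {𝔅 : Set (Set X)}
  {hull : Set X → Set X} {K : ℝ}

lemma bb_sub_hull (bb : IsBallBasis μ 𝔅 hull K) {B : Set X} (hB : B ∈ 𝔅) : B ⊆ hull B :=
  bb.subset_hull B hB B hB (le_mul_of_one_le_left (zero_le) one_le_two)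
    (by rw [inter_self]; exact nonempty_of_measure_ne_zero (bb.measure_pos B hB).ne')

lemma bb_one_le_K (bb : IsBallBasis μ 𝔅 hull K) {B : Set X} (hB : B ∈ 𝔅) : 1 ≤ K := by
  by_contra h
  push_neg at h
  have h1 : μ B ≤ ENNReal.ofReal K * μ B :=
    (measure_mono (bb_sub_hull bb hB)).trans (bb.hull_measure B hB)
  have h2 : ENNReal.ofReal K * μ B < 1 * μ B := by
    rw [ENNReal.mul_lt_mul_iff_left (bb.measure_pos B hB).ne' (bb.measure_lt_top B hB).ne]
    exact ENNReal.ofReal_lt_one.mpr h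
  rw [one_mul] at h2
  exact absurd (h1.trans_lt h2) (lt_irrefl _)

lemma vitali_sel (bb : IsBallBasis μ 𝔅 hull K) (F : Set (Set X)) (hF : F ⊆ 𝔅)
    (V : Set X) (hVf : μ V ≠ ∞) (hsub : ∀ A ∈ F, A ⊆ V) :
    ∃ G : ℕ → Set X, (∀ j, G j ∈ F ∨ G j = ∅) ∧ Pairwise (Function.onFun Disjoint G) ∧
      ∀ A ∈ F, ∃ j, G j ∈ F ∧ (A ∩ G j).Nonempty ∧ μ A ≤ 2 * μ (G j) := by
  classical
  let pick : Set (Set X) → Set X := fun S =>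
    if h : ∃ A, A ∈ S ∧ (⨆ C ∈ S, μ C) < 2 * μ A then h.choose else ∅
  let fam : ℕ → Set (Set X) := fun n =>
    Nat.rec F (fun _ Fn => {A | A ∈ Fn ∧ A ∩ pick Fn = ∅}) n
  have hfam_succ : ∀ n, fam (n+1) = {A | A ∈ fam n ∧ A ∩ pick (fam n) = ∅} := fun n => rfl
  have hfam_sub : ∀ n, fam n ⊆ F := by
    intro n
    induction n with
    | zero => exact le_refl _
    | succ n ih => intro A hA; exact ih hA.1
  have hfam_mono : ∀ m n, m ≤ n → fam n ⊆ fam m := by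
    intro m n h
    induction h with
    | refl => exact le_refl _
    | step h ih => exact fun A hA => ih hA.1
  have hpick : ∀ n, (fam n).Nonempty →
      pick (fam n) ∈ fam n ∧ (⨆ C ∈ fam n, μ C) < 2 * μ (pick (fam n)) := by
    intro n hne
    have hex : ∃ A, A ∈ fam n ∧ (⨆ C ∈ fam n, μ C) < 2 * μ A := by
      obtain ⟨A₀, hA₀⟩ := hne
      have hs0 : (⨆ C ∈ fam n, μ C) ≠ 0 := by
        intro h
        have h1 : μ A₀ ≤ ⨆ C ∈ fam n, μ C := le_biSup _ hA₀
        rw [h] at h1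
        exact (bb.measure_pos A₀ (hF (hfam_sub n hA₀))).ne'
          (le_antisymm h1 (zero_le))
      have hstop : (⨆ C ∈ fam n, μ C) ≠ ∞ := by
        have h1 : (⨆ C ∈ fam n, μ C) ≤ μ V :=
          iSup₂_le fun C hC => measure_mono (hsub C (hfam_sub n hC))
        exact (h1.trans_lt (lt_top_iff_ne_top.mpr hVf)).ne
      have hh : (⨆ C ∈ fam n, μ C) / 2 < ⨆ C ∈ fam n, μ C :=
        ENNReal.half_lt_self hs0 hstop
      rw [lt_iSup_iff] at hh
      obtain ⟨C, hC⟩ := hh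
      rw [lt_iSup_iff] at hC
      obtain ⟨hCmem, hClt⟩ := hC
      refine ⟨C, hCmem, ?_⟩
      calc (⨆ C ∈ fam n, μ C) = 2 * ((⨆ C ∈ fam n, μ C) / 2) :=
            (ENNReal.mul_div_cancel two_ne_zero (by norm_num)).symm
        _ < 2 * μ C := by
            rw [ENNReal.mul_lt_mul_iff_right two_ne_zero (by norm_num)]
            exact hClt
    have heq : pick (fam n) = hex.choose := dif_pos hex
    rw [heq]
    exact hex.choose_spec
  have hGe : ∀ n, ¬(fam n).Nonempty → pick (fam n) = ∅ := by
    intro n h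
    apply dif_neg
    rintro ⟨A, hA, -⟩
    exact h ⟨A, hA⟩
  refine ⟨fun j => pick (fam j), ?_, ?_, ?_⟩
  · intro j
    by_cases h : (fam j).Nonempty
    · exact Or.inl (hfam_sub _ (hpick j h).1)
    · exact Or.inr (hGe j h)
  · have key : ∀ i j, i < j → Disjoint (pick (fam i)) (pick (fam j)) := by
      intro i j hij
      by_cases hne : (fam j).Nonempty
      · have hGj : pick (fam j) ∈ fam (i+1) := hfam_mono (i+1) j hij (hpick j hne).1
        rw [hfam_succ] at hGj
        rw [Set.disjoint_iff_inter_eq_empty, inter_comm]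
        exact hGj.2
      · rw [hGe j hne]
        exact disjoint_empty _
    intro i j hij
    rcases lt_or_gt_of_ne hij with h | h
    · exact key i j h
    · exact (key j i h).symm
  · intro A hA
    have hdisj : Pairwise (Function.onFun Disjoint (fun j => pick (fam j))) := by
      have key : ∀ i j, i < j → Disjoint (pick (fam i)) (pick (fam j)) := by
        intro i j hij
        by_cases hne : (fam j).Nonempty
        · have hGj : pick (fam j) ∈ fam (i+1) := hfam_mono (i+1) j hij (hpick j hne).1
          rw [hfam_succ] at hGj
          rw [Set.disjoint_iff_inter_eq_empty, inter_comm]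
          exact hGj.2
        · rw [hGe j hne]
          exact disjoint_empty _
      intro i j hij
      rcases lt_or_gt_of_ne hij with h | h
      · exact key i j h
      · exact (key j i h).symm
    have hex : ∃ j, A ∉ fam j := by
      refine Classical.byContradiction fun hall => ?_
      push_neg at hall
      have hne : ∀ j, (fam j).Nonempty := fun j => ⟨A, hall j⟩
      have hGmem : ∀ j, pick (fam j) ∈ F := fun j => hfam_sub _ (hpick j (hne j)).1
      have hμA : ∀ j : ℕ, μ A / 2 ≤ μ (pick (fam j)) := by
        intro j
        have h1 : μ A ≤ 2 * μ (pick (fam j)) :=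
          (le_biSup _ (hall j)).trans (le_of_lt (hpick j (hne j)).2)
        rw [ENNReal.div_le_iff_le_mul (Or.inl two_ne_zero) (Or.inl (by norm_num))]
        rw [mul_comm] at h1
        exact h1
      have hsum : ∑' j, μ (pick (fam j)) = μ (⋃ j, pick (fam j)) :=
        (measure_iUnion hdisj (fun j => bb.measurableSet _ (hF (hGmem j)))).symm
      have hle : μ (⋃ j, pick (fam j)) ≤ μ V :=
        measure_mono (iUnion_subset fun j => hsub _ (hGmem j))
      have hA2 : μ A / 2 ≠ 0 := by
        simp only [ne_eq, ENNReal.div_eq_zero_iff, (bb.measure_pos A (hF hA)).ne',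
          false_or, not_or]
        norm_num
      have htop : (⊤ : ℝ≥0∞) ≤ μ V := by
        calc (⊤:ℝ≥0∞) = ∑' _ : ℕ, μ A / 2 := (ENNReal.tsum_const_eq_top_of_ne_zero hA2).symm
          _ ≤ ∑' j, μ (pick (fam j)) := ENNReal.tsum_le_tsum hμA
          _ = μ (⋃ j, pick (fam j)) := hsum
          _ ≤ μ V := hle
      exact hVf (top_le_iff.mp htop)
    haveI : DecidablePred fun n => A ∉ fam n := fun _ => Classical.dec _
    have hj0 : Nat.find hex ≠ 0 := by
      intro h
      have := Nat.find_spec hex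
      rw [h] at this
      exact this hA
    obtain ⟨j', hj'⟩ := Nat.exists_eq_succ_of_ne_zero hj0
    have hAj' : A ∈ fam j' := by
      have := Nat.find_min hex (by omega : j' < Nat.find hex)
      exact not_not.mp this
    have hAnot : A ∉ fam (j' + 1) := by
      have := Nat.find_spec hex
      rw [hj'] at this
      exact this
    have hne' : (fam j').Nonempty := ⟨A, hAj'⟩
    have hAint : A ∩ pick (fam j') ≠ ∅ := by
      intro h
      exact hAnot (by rw [hfam_succ]; exact ⟨hAj', h⟩)
    refine ⟨j', hfam_sub _ (hpick j' hne').1, nonempty_iff_ne_empty.mpr hAint, ?_⟩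
    exact (le_biSup _ hAj').trans (le_of_lt (hpick j' hne').2)

end Aux

section Aux2

variable [MeasurableSpace X] {μ : Measure X} {𝔅 : Set (Set X)}
  {hull : Set X → Set X} {K : ℝ}

lemma density_ball (bb : IsBallBasis μ 𝔅 hull K) (hK0 : 0 < K) (W : Set X)
    (hWm : MeasurableSet W) (hW0 : μ W ≠ 0) (hWf : μ W ≠ ∞) :
    ∃ A ∈ 𝔅, μ A ≤ ENNReal.ofReal (4 * K) * μ (W ∩ A) := by
  classical
  by_contra hcon
  push_neg at hcon
  obtain ⟨𝒞, h𝒞𝔅, h𝒞c, h𝒞μ⟩ := bb.approx W hWm (μ W / 2) (ENNReal.half_pos hW0)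
  set V := ⋃₀ 𝒞 with hV
  have hVW : μ (V \ W) < μ W / 2 := by
    refine lt_of_le_of_lt (measure_mono ?_) h𝒞μ
    rw [Set.symmDiff_def]
    exact subset_union_of_subset_right (fun x hx => hx) _
  have hWV' : μ (W \ V) < μ W / 2 := by
    refine lt_of_le_of_lt (measure_mono ?_) h𝒞μ
    rw [Set.symmDiff_def]
    exact subset_union_of_subset_left (fun x hx => hx) _
  have hWfin : μ (W ∩ V) ≠ ∞ := ((measure_mono inter_subset_left).trans_lt
    (lt_top_iff_ne_top.mpr hWf)).ne
  have hWV : μ W / 2 < μ (W ∩ V) := by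
    have h1 : μ W ≤ μ (W ∩ V) + μ (W \ V) := by
      conv_lhs => rw [← inter_union_diff W V]
      exact measure_union_le _ _
    have h2 : μ W < μ (W ∩ V) + μ W / 2 :=
      h1.trans_lt (ENNReal.add_lt_add_left hWfin hWV')
    have h3 : μ W / 2 + μ W / 2 < μ (W ∩ V) + μ W / 2 := by
      rw [ENNReal.add_halves]; exact h2
    exact (ENNReal.add_lt_add_iff_right (ENNReal.div_lt_top hWf two_ne_zero).ne).mp h3
  have hVfin : μ V ≠ ∞ := by
    have h1 : μ V ≤ μ W + μ (V \ W) := by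
      conv_lhs => rw [← inter_union_diff V W]
      refine (measure_union_le _ _).trans (add_le_add_left (measure_mono inter_subset_right) _)
    have h2 : μ (V \ W) ≠ ∞ := (hVW.trans_le le_top).ne
    intro h
    rw [h] at h1
    exact (ENNReal.add_lt_top.mpr ⟨lt_top_iff_ne_top.mpr hWf, lt_top_iff_ne_top.mpr h2⟩).ne
      (top_le_iff.mp h1)
  obtain ⟨G, hGF, hGdisj, hGcov⟩ := vitali_sel bb 𝒞 h𝒞𝔅 V hVfin
    (fun A hA => subset_sUnion_of_mem hA)
  have hGmeas : ∀ j, MeasurableSet (G j) := by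
    intro j
    rcases hGF j with h | h
    · exact bb.measurableSet _ (h𝒞𝔅 h)
    · rw [h]; exact MeasurableSet.empty
  set H : ℕ → Set X := fun j => if G j ∈ 𝒞 then hull (G j) else ∅ with hH
  have hcov2 : W ∩ V ⊆ ⋃ j, W ∩ H j := by
    rintro y ⟨hyW, hyV⟩
    obtain ⟨A, hA𝒞, hyA⟩ := hyV
    obtain ⟨j, hj𝒞, hjne, hjμ⟩ := hGcov A hA𝒞
    have hsubj : A ⊆ hull (G j) := bb.subset_hull (G j) (h𝒞𝔅 hj𝒞) A (h𝒞𝔅 hA𝒞) hjμ hjne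
    refine mem_iUnion.mpr ⟨j, hyW, ?_⟩
    rw [hH]
    simp only [if_pos hj𝒞]
    exact hsubj hyA
  have hper : ∀ j, ENNReal.ofReal (4*K) * μ (W ∩ H j) ≤ ENNReal.ofReal K * μ (G j) := by
    intro j
    by_cases hj : G j ∈ 𝒞
    · have h1 : ENNReal.ofReal (4*K) * μ (W ∩ hull (G j)) ≤ μ (hull (G j)) :=
        (hcon _ (bb.hull_mem _ (h𝒞𝔅 hj))).le
      have h2 : μ (hull (G j)) ≤ ENNReal.ofReal K * μ (G j) := bb.hull_measure _ (h𝒞𝔅 hj)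
      rw [hH]
      simp only [if_pos hj]
      exact h1.trans h2
    · rw [hH]
      simp only [if_neg hj, inter_empty, measure_empty, mul_zero]
      exact zero_le
  have hsum : ENNReal.ofReal (4*K) * μ (W ∩ V) ≤ ENNReal.ofReal K * μ V := by
    calc ENNReal.ofReal (4*K) * μ (W ∩ V)
        ≤ ENNReal.ofReal (4*K) * ∑' j, μ (W ∩ H j) :=
          mul_le_mul_right ((measure_mono hcov2).trans (measure_iUnion_le _)) _
      _ = ∑' j, ENNReal.ofReal (4*K) * μ (W ∩ H j) := ENNReal.tsum_mul_left.symm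
      _ ≤ ∑' j, ENNReal.ofReal K * μ (G j) := ENNReal.tsum_le_tsum hper
      _ = ENNReal.ofReal K * ∑' j, μ (G j) := ENNReal.tsum_mul_left
      _ = ENNReal.ofReal K * μ (⋃ j, G j) := by rw [measure_iUnion hGdisj hGmeas]
      _ ≤ ENNReal.ofReal K * μ V := by
          refine mul_le_mul_right (measure_mono (iUnion_subset fun j => ?_)) _
          rcases hGF j with h | h
          · exact subset_sUnion_of_mem h
          · rw [h]; exact empty_subset _
  have hμV2 : μ V ≤ 2 * μ W := by
    have h1 : μ V ≤ μ W + μ (V \ W) := by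
      conv_lhs => rw [← inter_union_diff V W]
      refine (measure_union_le _ _).trans (add_le_add_left (measure_mono inter_subset_right) _)
    have h2 : μ W + μ (V \ W) ≤ μ W + μ W := by
      refine add_le_add_right (hVW.le.trans ?_) _
      exact ENNReal.half_le_self
    calc μ V ≤ μ W + μ W := h1.trans h2
      _ = 2 * μ W := (two_mul _).symm
  have h4K0 : ENNReal.ofReal (4*K) ≠ 0 := (ENNReal.ofReal_pos.mpr (by linarith)).ne'
  have hkey : ENNReal.ofReal (4*K) * (μ W / 2) = ENNReal.ofReal K * (2 * μ W) := by
    have h4 : ENNReal.ofReal (4*K) = 2 * (2 * ENNReal.ofReal K) := by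
      rw [show (4:ℝ)*K = 2*(2*K) by ring, ENNReal.ofReal_mul (by norm_num),
        ENNReal.ofReal_mul (by norm_num), ENNReal.ofReal_ofNat]
    rw [h4]
    have h2 : (2:ℝ≥0∞) * (μ W / 2) = μ W := ENNReal.mul_div_cancel two_ne_zero (by norm_num)
    calc 2 * (2 * ENNReal.ofReal K) * (μ W / 2)
        = 2 * ENNReal.ofReal K * (2 * (μ W / 2)) := by ring
      _ = 2 * ENNReal.ofReal K * μ W := by rw [h2]
      _ = ENNReal.ofReal K * (2 * μ W) := by ring
  have hL : ENNReal.ofReal (4*K) * (μ W / 2) < ENNReal.ofReal (4*K) * μ (W ∩ V) := by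
    rw [ENNReal.mul_lt_mul_iff_right h4K0 ENNReal.ofReal_ne_top]
    exact hWV
  have hR : ENNReal.ofReal K * μ V ≤ ENNReal.ofReal K * (2 * μ W) := mul_le_mul_right hμV2 _
  rw [hkey] at hL
  exact absurd ((hL.trans_le hsum).trans_le hR) (lt_irrefl _)

lemma grow_ball {η : ℝ} (bb : IsBallBasis μ 𝔅 hull K) (db : IsDoublingBasis μ 𝔅 hull η)
    (hK1 : 1 ≤ K) (hη1 : 1 ≤ η) :
    ∀ n : ℕ, ∀ A ∈ 𝔅, ∃ D ∈ 𝔅, A ⊆ D ∧ μ D ≤ ENNReal.ofReal (K^(n+1) * η^n) * μ A ∧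
      ((2:ℝ≥0∞)^n * μ A ≤ μ D ∨ D = univ) := by
  have hK0 : (0:ℝ) < K := lt_of_lt_of_le one_pos hK1
  have hη0 : (0:ℝ) < η := lt_of_lt_of_le one_pos hη1
  intro n
  induction n with
  | zero =>
    intro A hA
    refine ⟨A, hA, subset_rfl, ?_, Or.inl (by simp)⟩
    have h1 : (1:ℝ≥0∞) ≤ ENNReal.ofReal (K^1 * η^0) := by
      rw [pow_one, pow_zero, mul_one]
      exact ENNReal.one_le_ofReal.mpr hK1
    exact le_mul_of_one_le_left (zero_le) h1
  | succ n ih =>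
    intro A hA
    obtain ⟨D, hD, hAD, hDle, hDor⟩ := ih A hA
    have hmono : (K^(n+1) * η^n : ℝ) ≤ K^(n+2) * η^(n+1) := by
      calc K^(n+1)*η^n ≤ K^(n+2)*η^n :=
            mul_le_mul_of_nonneg_right (pow_le_pow_right₀ hK1 (by omega)) (by positivity)
        _ ≤ K^(n+2)*η^(n+1) :=
            mul_le_mul_of_nonneg_left (pow_le_pow_right₀ hη1 (by omega)) (by positivity)
    rcases hDor with hgrow | huniv
    · by_cases hhD : hull D = univ
      · refine ⟨hull D, bb.hull_mem D hD, hAD.trans (bb_sub_hull bb hD), ?_, Or.inr hhD⟩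
        calc μ (hull D) ≤ ENNReal.ofReal K * μ D := bb.hull_measure D hD
          _ ≤ ENNReal.ofReal K * (ENNReal.ofReal (K^(n+1)*η^n) * μ A) := mul_le_mul_right hDle _
          _ = ENNReal.ofReal (K * (K^(n+1)*η^n)) * μ A := by
              rw [ENNReal.ofReal_mul hK0.le, mul_assoc]
          _ ≤ ENNReal.ofReal (K^(n+2)*η^(n+1)) * μ A := by
              refine mul_le_mul_left (ENNReal.ofReal_le_ofReal ?_) _
              calc K * (K^(n+1)*η^n) = K^(n+2) * η^n := by ring
                _ ≤ K^(n+2)*η^(n+1) :=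
                  mul_le_mul_of_nonneg_left (pow_le_pow_right₀ hη1 (by omega)) (by positivity)
      · obtain ⟨D', hD', hDD', hgrow', hle'⟩ := db D hD hhD
        refine ⟨D', hD', hAD.trans hDD', ?_, Or.inl ?_⟩
        · calc μ D' ≤ ENNReal.ofReal η * μ D := hle'
            _ ≤ ENNReal.ofReal η * (ENNReal.ofReal (K^(n+1)*η^n) * μ A) := mul_le_mul_right hDle _
            _ = ENNReal.ofReal (η * (K^(n+1)*η^n)) * μ A := by
                rw [ENNReal.ofReal_mul hη0.le, mul_assoc]
            _ ≤ ENNReal.ofReal (K^(n+2)*η^(n+1)) * μ A := by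
                refine mul_le_mul_left (ENNReal.ofReal_le_ofReal ?_) _
                calc η * (K^(n+1)*η^n) = K^(n+1) * η^(n+1) := by ring
                  _ ≤ K^(n+2)*η^(n+1) :=
                    mul_le_mul_of_nonneg_right (pow_le_pow_right₀ hK1 (by omega)) (by positivity)
        · calc (2:ℝ≥0∞)^(n+1) * μ A = 2 * ((2:ℝ≥0∞)^n * μ A) := by ring
            _ ≤ 2 * μ D := mul_le_mul_right hgrow _
            _ ≤ μ D' := hgrow'
    · exact ⟨D, hD, hAD, hDle.trans (mul_le_mul_left
        (ENNReal.ofReal_le_ofReal hmono) _), Or.inr huniv⟩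

lemma exists_next {η : ℝ} (bb : IsBallBasis μ 𝔅 hull K) (db : IsDoublingBasis μ 𝔅 hull η)
    (hK1 : 1 ≤ K) (hη1 : 1 ≤ η) {m : ℕ} (hm1 : 1 ≤ m) (hm2 : 2 * K ≤ 2 ^ m) :
    ∀ A ∈ 𝔅, ∃ A' ∈ 𝔅, A ⊆ A' ∧ hull A ⊆ A' ∧
      μ A' ≤ ENNReal.ofReal (K^(m+2) * η^m) * μ A ∧ (2 * μ A ≤ μ A' ∨ A' = univ) := by
  have hK0 : (0:ℝ) < K := lt_of_lt_of_le one_pos hK1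
  intro A hA
  obtain ⟨D, hD, hAD, hDle, hDor⟩ := grow_ball bb db hK1 hη1 m A hA
  rcases hDor with hgrow | huniv
  · have hAne : A.Nonempty := nonempty_of_measure_ne_zero (bb.measure_pos A hA).ne'
    have hK2m : ENNReal.ofReal K ≤ (2:ℝ≥0∞)^m := by
      have h1 : ENNReal.ofReal K ≤ ENNReal.ofReal ((2:ℝ)^m) :=
        ENNReal.ofReal_le_ofReal (by nlinarith)
      rwa [ENNReal.ofReal_pow (by norm_num), ENNReal.ofReal_ofNat] at h1
    have h2m : ENNReal.ofReal K * μ A ≤ μ D :=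
      (mul_le_mul_left hK2m _).trans hgrow
    have hhullsub : hull A ⊆ hull D := by
      refine bb.subset_hull D hD (hull A) (bb.hull_mem A hA) ?_ ?_
      · calc μ (hull A) ≤ ENNReal.ofReal K * μ A := bb.hull_measure A hA
          _ ≤ μ D := h2m
          _ ≤ 2 * μ D := le_mul_of_one_le_left (zero_le) one_le_two
      · obtain ⟨y, hy⟩ := hAne
        exact ⟨y, bb_sub_hull bb hA hy, hAD hy⟩
    refine ⟨hull D, bb.hull_mem D hD, hAD.trans (bb_sub_hull bb hD), hhullsub, ?_, Or.inl ?_⟩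
    · calc μ (hull D) ≤ ENNReal.ofReal K * μ D := bb.hull_measure D hD
        _ ≤ ENNReal.ofReal K * (ENNReal.ofReal (K^(m+1)*η^m) * μ A) := mul_le_mul_right hDle _
        _ = ENNReal.ofReal (K^(m+2)*η^m) * μ A := by
            rw [← mul_assoc, ← ENNReal.ofReal_mul hK0.le,
              show K*(K^(m+1)*η^m) = K^(m+2)*η^m by ring]
    · have h2le : (2:ℝ≥0∞) ≤ 2^m := by
        calc (2:ℝ≥0∞) = 2^1 := (pow_one 2).symm
          _ ≤ 2^m := pow_le_pow_right₀ one_le_two hm1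
      calc 2 * μ A ≤ (2:ℝ≥0∞)^m * μ A := mul_le_mul_left h2le _
        _ ≤ μ D := hgrow
        _ ≤ μ (hull D) := measure_mono (bb_sub_hull bb hD)
  · refine ⟨D, hD, hAD, by rw [huniv]; exact subset_univ _, ?_, Or.inr huniv⟩
    refine hDle.trans (mul_le_mul_left (ENNReal.ofReal_le_ofReal ?_) _)
    exact mul_le_mul_of_nonneg_right (pow_le_pow_right₀ hK1 (by omega)) (by positivity)

end Aux2

section Aux3

variable [MeasurableSpace X] {μ : Measure X} {𝔅 : Set (Set X)}
  {hull : Set X → Set X} {K : ℝ}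

lemma stopping (bb : IsBallBasis μ 𝔅 hull K) {ρ' g0 : ℝ} (hρ : 0 < ρ')
    (hnext : ∀ A ∈ 𝔅, ∃ A' ∈ 𝔅, A ⊆ A' ∧ hull A ⊆ A' ∧
      μ A' ≤ ENNReal.ofReal g0 * μ A ∧ (2 * μ A ≤ μ A' ∨ A' = univ))
    (U Bb : Set X) (hBb : Bb ∈ 𝔅) (hUB : μ U < ENNReal.ofReal ρ' * μ Bb) (hUf : μ U ≠ ∞)
    {x : X} {C : Set X} (hC : C ∈ 𝔅) (hxC : x ∈ C)
    (hCl : ENNReal.ofReal ρ' * μ C ≤ μ (U ∩ C)) :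
    ∃ A ∈ 𝔅, x ∈ A ∧ ENNReal.ofReal ρ' * μ A ≤ μ (U ∩ A) ∧
      μ (U ∩ hull A) ≤ ENNReal.ofReal ρ' * (ENNReal.ofReal g0 * μ A) := by
  classical
  choose nxt hn1 hn2 hn3 hn4 hn5 using hnext
  let step : Set X → Set X := fun A => if h : A ∈ 𝔅 then nxt A h else A
  have hstep : ∀ A (h : A ∈ 𝔅), step A = nxt A h := fun A h => dif_pos h
  let c : ℕ → Set X := fun k => step^[k] C
  have hc0 : c 0 = C := rfl
  have hcs : ∀ k, c (k+1) = step (c k) := fun k => Function.iterate_succ_apply' step k C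
  have hc𝔅 : ∀ k, c k ∈ 𝔅 := by
    intro k
    induction k with
    | zero => exact hC
    | succ k ih => rw [hcs, hstep _ ih]; exact hn1 _ ih
  have hsub : ∀ k, c k ⊆ c (k+1) := by
    intro k
    rw [hcs, hstep _ (hc𝔅 k)]
    exact hn2 _ _
  have hx : ∀ k, x ∈ c k := by
    intro k
    induction k with
    | zero => exact hxC
    | succ k ih => exact hsub k ih
  have hhull : ∀ k, hull (c k) ⊆ c (k+1) := by
    intro k
    rw [hcs, hstep _ (hc𝔅 k)]
    exact hn3 _ _
  have hgle : ∀ k, μ (c (k+1)) ≤ ENNReal.ofReal g0 * μ (c k) := by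
    intro k
    rw [hcs, hstep _ (hc𝔅 k)]
    exact hn4 _ _
  have hgor : ∀ k, 2 * μ (c k) ≤ μ (c (k+1)) ∨ c (k+1) = univ := by
    intro k
    rw [hcs, hstep _ (hc𝔅 k)]
    exact hn5 _ _
  have huniv : ∀ k l, k ≤ l → c k = univ → c l = univ := by
    intro k l hkl hk
    induction hkl with
    | refl => exact hk
    | step h ih =>
      rename_i l'
      have := hsub l'
      rw [ih] at this
      exact univ_subset_iff.mp this
  set T := {k | ENNReal.ofReal ρ' * μ (c k) ≤ μ (U ∩ c k)} with hT
  have hT0 : (0:ℕ) ∈ T := by rw [hT]; exact hCl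
  have hTuniv : ∀ k, c k = univ → k ∉ T := by
    intro k hk hkT
    rw [hT, Set.mem_setOf_eq, hk] at hkT
    have h1 : μ (U ∩ univ) ≤ μ U := measure_mono inter_subset_left
    have h2 : ENNReal.ofReal ρ' * μ Bb ≤ ENNReal.ofReal ρ' * μ (univ : Set X) :=
      mul_le_mul_right (measure_mono (subset_univ _)) _
    exact absurd ((hUB.trans_le h2).trans_le (hkT.trans h1)) (lt_irrefl _)
  have hbdd : BddAbove T := by
    by_cases hu : ∃ k, c k = univ
    · obtain ⟨k0, hk0⟩ := hu
      refine ⟨k0, fun k hk => ?_⟩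
      by_contra h
      push_neg at h
      exact hTuniv k (huniv k0 k h.le hk0) hk
    · push_neg at hu
      have hgrow : ∀ k, (2:ℝ≥0∞)^k * μ C ≤ μ (c k) := by
        intro k
        induction k with
        | zero => simp [hc0]
        | succ k ih =>
          rcases hgor k with h | h
          · calc (2:ℝ≥0∞)^(k+1) * μ C = 2 * ((2:ℝ≥0∞)^k * μ C) := by ring
              _ ≤ 2 * μ (c k) := mul_le_mul_right ih _
              _ ≤ μ (c (k+1)) := h
          · exact absurd h (hu (k+1))
      have hd0 : ENNReal.ofReal ρ' * μ C ≠ 0 :=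
        mul_ne_zero (ENNReal.ofReal_pos.mpr hρ).ne' (bb.measure_pos C hC).ne'
      obtain ⟨N, hN⟩ := ENNReal.exists_nat_gt
        (ENNReal.div_lt_top hUf hd0).ne
      refine ⟨N, fun k hk => ?_⟩
      by_contra hlt
      push_neg at hlt
      have h1 : ENNReal.ofReal ρ' * μ (c k) ≤ μ U := by
        rw [hT, Set.mem_setOf_eq] at hk
        exact hk.trans (measure_mono inter_subset_left)
      have h2 : μ U < (2:ℝ≥0∞)^k * (ENNReal.ofReal ρ' * μ C) := by
        have hNle : (N:ℝ≥0∞) ≤ (2:ℝ≥0∞)^k := by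
          have hN2 : (N:ℝ≥0∞) ≤ (2:ℝ≥0∞)^N := by
            have := (Nat.lt_two_pow_self (n := N)).le
            calc (N:ℝ≥0∞) ≤ ((2^N : ℕ) : ℝ≥0∞) := by exact_mod_cast this
              _ = (2:ℝ≥0∞)^N := by push_cast; ring
          exact hN2.trans (pow_le_pow_right₀ one_le_two hlt.le)
        have := (ENNReal.div_lt_iff (Or.inl hd0)
          (Or.inl (by
            refine ENNReal.mul_ne_top ENNReal.ofReal_ne_top (bb.measure_lt_top C hC).ne))).mp hN
        exact this.trans_le (mul_le_mul_left hNle _)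
      have h3 : (2:ℝ≥0∞)^k * (ENNReal.ofReal ρ' * μ C) ≤ ENNReal.ofReal ρ' * μ (c k) := by
        calc (2:ℝ≥0∞)^k * (ENNReal.ofReal ρ' * μ C)
            = ENNReal.ofReal ρ' * ((2:ℝ≥0∞)^k * μ C) := by ring
          _ ≤ ENNReal.ofReal ρ' * μ (c k) := mul_le_mul_right (hgrow k) _
      exact absurd ((h2.trans_le h3).trans_le h1) (lt_irrefl _)
  set k0 := sSup T with hk0def
  have hk0T : k0 ∈ T := Nat.sSup_mem ⟨0, hT0⟩ hbdd
  have hk1T : k0 + 1 ∉ T := by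
    intro h
    have := le_csSup hbdd h
    omega
  refine ⟨c k0, hc𝔅 k0, hx k0, hk0T, ?_⟩
  have h1 : μ (U ∩ hull (c k0)) ≤ μ (U ∩ c (k0+1)) :=
    measure_mono (inter_subset_inter_right _ (hhull k0))
  have h2 : μ (U ∩ c (k0+1)) < ENNReal.ofReal ρ' * μ (c (k0+1)) := by
    rw [hT, Set.mem_setOf_eq] at hk1T
    exact lt_of_not_ge hk1T
  have h3 : ENNReal.ofReal ρ' * μ (c (k0+1)) ≤ ENNReal.ofReal ρ' * (ENNReal.ofReal g0 * μ (c k0)) :=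
    mul_le_mul_right (hgle k0) _
  exact h1.trans (h2.le.trans h3)

lemma osc_step {θ α lam dlt Mr : ℝ} (bb : IsBallBasis μ 𝔅 hull K)
    {B U H E : Set X} (hB : B ∈ 𝔅) (hH : H ∈ 𝔅)
    (hUmeas : MeasurableSet U)
    {g : X → ℝ} (hS : ∀ y, y ∈ B → lam < |g y| → y ∈ U)
    (hreg : ENNReal.ofReal θ * μ H ≤ μ (H ∩ B))
    (hupper : μ (U ∩ H) ≤ ENNReal.ofReal (θ/2) * μ H)
    (hEmeas : MeasurableSet E) (hEH : E ⊆ H) (hEμ : ENNReal.ofReal α * μ H < μ E)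
    (hosc : ∀ z ∈ E, ∀ y ∈ E, |g z - g y| ≤ Mr + dlt)
    (hαθ : 1 + θ/2 ≤ α + θ) (hα0 : 0 ≤ α) (hθ0 : 0 ≤ θ) :
    μ ({y ∈ B | lam + Mr + dlt < |g y|} ∩ H) ≤ ENNReal.ofReal (1 - α) * μ H := by
  have hHfin : μ H ≠ ∞ := (bb.measure_lt_top H hH).ne
  have hHmeas := bb.measurableSet H hH
  have hBmeas := bb.measurableSet B hB
  have hkey : ((E ∩ (H ∩ B)) \ U).Nonempty := by
    rw [nonempty_iff_ne_empty]
    intro hemp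
    have h0 : μ ((E ∩ (H ∩ B)) \ U) = 0 := by rw [hemp]; exact measure_empty
    have hsplit : μ (E ∩ (H ∩ B)) ≤ μ (U ∩ H) := by
      have hsub : E ∩ (H ∩ B) ⊆ ((E ∩ (H ∩ B)) \ U) ∪ (U ∩ H) := by
        intro z hz
        by_cases hzU : z ∈ U
        · exact Or.inr ⟨hzU, hz.2.1⟩
        · exact Or.inl ⟨hz, hzU⟩
      calc μ (E ∩ (H ∩ B)) ≤ μ ((E ∩ (H ∩ B)) \ U) + μ (U ∩ H) :=
            le_trans (measure_mono hsub) (measure_union_le _ _)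
        _ = μ (U ∩ H) := by rw [h0, zero_add]
    have hincl : μ E + μ (H ∩ B) ≤ μ H + μ (E ∩ (H ∩ B)) := by
      have hx := measure_union_add_inter (μ := μ) E (hHmeas.inter hBmeas)
      rw [← hx]
      exact add_le_add_left (measure_mono (union_subset hEH inter_subset_left)) _
    have hlhs : ENNReal.ofReal (α + θ) * μ H < μ E + μ (H ∩ B) := by
      rw [ENNReal.ofReal_add hα0 hθ0, add_mul]
      exact ENNReal.add_lt_add_of_lt_of_le
        (by
          refine ENNReal.mul_ne_top ENNReal.ofReal_ne_top hHfin) hEμ hreg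
    have hrhs : μ H + μ (E ∩ (H ∩ B)) ≤ ENNReal.ofReal (1 + θ/2) * μ H := by
      rw [ENNReal.ofReal_add (by norm_num) (by positivity), add_mul, ENNReal.ofReal_one, one_mul]
      exact add_le_add_right (hsplit.trans hupper) _
    have hfin : ENNReal.ofReal (α + θ) * μ H < ENNReal.ofReal (1 + θ/2) * μ H :=
      hlhs.trans_le (hincl.trans hrhs)
    have hge : ENNReal.ofReal (1 + θ/2) * μ H ≤ ENNReal.ofReal (α + θ) * μ H :=
      mul_le_mul_left (ENNReal.ofReal_le_ofReal hαθ) _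
    exact absurd (hfin.trans_le hge) (lt_irrefl _)
  obtain ⟨y0, ⟨hy0E, hy0H, hy0B⟩, hy0U⟩ := hkey
  have hgy0 : |g y0| ≤ lam := by
    by_contra h
    push_neg at h
    exact hy0U (hS y0 hy0B h)
  have hcap : {y ∈ B | lam + Mr + dlt < |g y|} ∩ H ⊆ H \ E := by
    rintro z ⟨⟨hzB, hzg⟩, hzH⟩
    refine ⟨hzH, fun hzE => ?_⟩
    have h1 := hosc z hzE y0 hy0E
    have h2 : |g z| - |g y0| ≤ |g z - g y0| := abs_sub_abs_le_abs_sub (g z) (g y0)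
    linarith
  have hEfin : μ E ≠ ∞ := ((measure_mono hEH).trans_lt (lt_top_iff_ne_top.mpr hHfin)).ne
  calc μ ({y ∈ B | lam + Mr + dlt < |g y|} ∩ H) ≤ μ (H \ E) := measure_mono hcap
    _ = μ H - μ E := measure_diff hEH hEmeas.nullMeasurableSet hEfin
    _ ≤ μ H - ENNReal.ofReal α * μ H := tsub_le_tsub_left hEμ.le _
    _ = ENNReal.ofReal (1 - α) * μ H := by
        rw [ENNReal.ofReal_sub _ hα0, ENNReal.ofReal_one,
          ENNReal.sub_mul (fun _ _ => hHfin), one_mul]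

end Aux3

set_option maxHeartbeats 2000000 in
theorem good_lambda_bmoAlpha
    (K η θ : ℝ) (hK : 0 < K) (hη : 2 < η) (hθ : 0 < θ) (hθ1 : θ < 1) :
    ∃ γ : ℝ, 2 < γ ∧
      ∀ (X : Type) (_ : MeasurableSpace X) (μ : Measure X)
        (𝔅 : Set (Set X)) (hull : Set X → Set X),
        IsBallBasis μ 𝔅 hull K →
        IsDoublingBasis μ 𝔅 hull η →
        IsRegularBasis μ 𝔅 hull θ →
        ∀ ε : ℝ, 0 < ε → ε < 1 →
          ∀ g : X → ℝ,
            (⨆ (B : Set X) (_ : B ∈ 𝔅), oscBeta μ g B (1 - ε * θ / (4 * γ ^ 2 * K))) ≠ ∞ →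
            ∀ B ∈ 𝔅, ∀ lam : ℝ, 0 < lam →
              μ {x ∈ B | lam < |g x|} ≤ ENNReal.ofReal (θ / (5 * K * γ ^ 2)) * μ B →
              μ {x ∈ B |
                  lam + (⨆ (B' : Set X) (_ : B' ∈ 𝔅),
                    oscBeta μ g B' (1 - ε * θ / (4 * γ ^ 2 * K))).toReal < |g x|} ≤
                ENNReal.ofReal ε * μ {x ∈ B | lam < |g x|} := by
  classical
  obtain ⟨m, hm⟩ : ∃ m : ℕ, m = ⌈2*K⌉₊ := ⟨_, rfl⟩
  obtain ⟨g0, hg0⟩ : ∃ g0 : ℝ, g0 = K^(m+2)*η^m := ⟨_, rfl⟩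
  obtain ⟨γ, hγdef⟩ : ∃ γ : ℝ, γ = 3 + g0 + K := ⟨_, rfl⟩
  have hη1 : (1:ℝ) ≤ η := by linarith
  have hη0 : (0:ℝ) < η := by linarith
  have hm1 : 1 ≤ m := by rw [hm]; exact Nat.ceil_pos.mpr (by linarith)
  have hg0pos : 0 < g0 := by rw [hg0]; positivity
  have hγ2 : 2 < γ := by rw [hγdef]; linarith
  refine ⟨γ, hγ2, ?_⟩
  intro X mX μ 𝔅 hull bb db rb ε hε0 hε1 g hMfin B hB lam hlam hsmall
  have hK1 : 1 ≤ K := bb_one_le_K bb hB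
  have hm2 : 2*K ≤ 2^m := by
    have h1 : (2*K : ℝ) ≤ (m:ℝ) := by rw [hm]; exact_mod_cast Nat.le_ceil (2*K)
    have h2 : (m:ℝ) < 2^m := by exact_mod_cast Nat.lt_two_pow_self (n := m)
    linarith
  have hg02 : 2 ≤ g0 := by
    have h1 : (1:ℝ) ≤ K^(m+2) := one_le_pow₀ hK1
    have h2 : (2:ℝ) ≤ 2^m := by
      calc (2:ℝ) = 2^1 := (pow_one 2).symm
        _ ≤ 2^m := pow_le_pow_right₀ one_le_two hm1
    have h3 : (2:ℝ)^m ≤ η^m := pow_le_pow_left₀ (by norm_num) hη.le m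
    rw [hg0]
    nlinarith
  have hγ3 : 3 ≤ γ := by rw [hγdef]; linarith
  have hγg0 : g0 ≤ γ := by rw [hγdef]; linarith
  have hγK : K ≤ γ := by rw [hγdef]; linarith
  have hγ1 : 1 ≤ γ := by linarith
  have hγpos : (0:ℝ) < γ := by linarith
  have hγsq : γ ≤ γ^2 := by nlinarith
  have hγ9 : 9 ≤ γ^2 := by nlinarith
  obtain ⟨ρ, hρdef⟩ : ∃ ρ : ℝ, ρ = min (θ/(2*g0)) (1/(4*K)) := ⟨_, rfl⟩
  have hρ0 : 0 < ρ := by rw [hρdef]; exact lt_min (by positivity) (by positivity)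
  have c2' : ρ * g0 ≤ θ/2 := by
    have h := min_le_left (θ/(2*g0)) (1/(4*K))
    have h2 : ρ * g0 ≤ (θ/(2*g0)) * g0 := by
      rw [hρdef]
      exact mul_le_mul_of_nonneg_right h hg0pos.le
    have h3 : (θ/(2*g0)) * g0 = θ/2 := by
      field_simp
    linarith
  have c3' : ρ * (4*K) ≤ 1 := by
    have h := min_le_right (θ/(2*g0)) (1/(4*K))
    have h2 : ρ * (4*K) ≤ (1/(4*K)) * (4*K) := by
      rw [hρdef]
      exact mul_le_mul_of_nonneg_right h (by linarith)
    have h3 : (1/(4*K)) * (4*K) = 1 := by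
      field_simp
    linarith
  have key1 : 2*g0 < 5*K*γ^2 := by nlinarith [hγg0, hγsq, hγ9, hK1, hg0pos]
  have key2 : θ*(4*K) < 1*(5*K*γ^2) := by nlinarith [hθ1, hK, hγ9, hθ]
  have c4 : θ / (5 * K * γ ^ 2) < ρ := by
    rw [hρdef]
    refine lt_min ?_ ?_
    · rw [div_lt_div_iff₀ (by positivity) (by positivity)]
      exact mul_lt_mul_of_pos_left key1 hθ
    · rw [div_lt_div_iff₀ (by positivity) (by positivity)]
      exact key2
  have c5 : θ/(4*γ^2) ≤ ρ := by
    rw [hρdef]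
    refine le_min ?_ ?_
    · rw [div_le_div_iff₀ (by positivity) (by positivity)]
      exact mul_le_mul_of_nonneg_left (by nlinarith [hγg0, hγsq, hγ1]) hθ.le
    · rw [div_le_div_iff₀ (by positivity) (by positivity)]
      nlinarith [hθ1, hK1, hγK, hγsq, hK]
  set α' : ℝ := 1 - ε * θ / (4 * γ ^ 2 * K) with hα'def
  have h1α : 1 - α' = ε*θ/(4*γ^2*K) := by rw [hα'def]; ring
  have c6 : ε*θ/(4*γ^2*K) ≤ θ/2 := by
    rw [div_le_div_iff₀ (by positivity) (by norm_num)]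
    nlinarith [mul_nonneg (mul_nonneg hθ.le (by linarith : (0:ℝ) ≤ K)) (by linarith : (0:ℝ) ≤ γ^2 - 9),
      mul_le_mul_of_nonneg_right hε1.le hθ.le,
      mul_nonneg hθ.le (by linarith : (0:ℝ) ≤ K - 1), hθ]
  have c7 : 0 ≤ α' := by
    have : ε*θ/(4*γ^2*K) ≤ θ/2 := c6
    rw [hα'def]
    linarith
  have c9 : 1 + θ/2 ≤ α' + θ := by
    rw [hα'def]
    have := c6
    linarith
  have c8 : (1 - α') * K = ε * (θ/(4*γ^2)) := by
    rw [h1α]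
    field_simp
  have h1α0 : (0:ℝ) ≤ 1 - α' := by rw [h1α]; positivity
  set M := (⨆ (B' : Set X) (_ : B' ∈ 𝔅), oscBeta μ g B' α') with hMdef
  set S := {x ∈ B | lam < |g x|} with hSdef
  set U := toMeasurable μ S ∩ B with hUdef
  have hBmeas := bb.measurableSet B hB
  have hUmeas : MeasurableSet U := (measurableSet_toMeasurable μ S).inter hBmeas
  have hSU : S ⊆ U := fun x hx => ⟨subset_toMeasurable μ S hx, hx.1⟩
  have hUsub : U ⊆ B := inter_subset_right
  have hUμ : μ U = μ S := le_antisymm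
    ((measure_mono inter_subset_left).trans_eq (measure_toMeasurable S))
    (measure_mono hSU)
  have hUfin : μ U < ∞ := (measure_mono hUsub).trans_lt (bb.measure_lt_top B hB)
  have hUsmall : μ U < ENNReal.ofReal ρ * μ B := by
    calc μ U = μ S := hUμ
      _ ≤ ENNReal.ofReal (θ / (5 * K * γ ^ 2)) * μ B := hsmall
      _ < ENNReal.ofReal ρ * μ B := by
          rw [ENNReal.mul_lt_mul_iff_left (bb.measure_pos B hB).ne' (bb.measure_lt_top B hB).ne]
          exact (ENNReal.ofReal_lt_ofReal_iff hρ0).mpr c4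
  have hnext := exists_next bb db hK1 hη1 hm1 hm2
  rw [← hg0] at hnext
  set F : Set (Set X) := {A | A ∈ 𝔅 ∧ ENNReal.ofReal ρ * μ A ≤ μ (U ∩ A) ∧
    μ (U ∩ hull A) ≤ ENNReal.ofReal (ρ * g0) * μ A} with hFdef
  have hF𝔅 : F ⊆ 𝔅 := fun A hA => hA.1
  have hstop' : ∀ (z : X) (C : Set X), C ∈ 𝔅 → z ∈ C →
      ENNReal.ofReal ρ * μ C ≤ μ (U ∩ C) → ∃ A ∈ F, z ∈ A := by
    intro z C hC hzC hge
    obtain ⟨A, hA𝔅, hzA, hlo, hhi⟩ := stopping bb hρ0 hnext U B hB hUsmall hUfin.ne hC hzC hge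
    refine ⟨A, ⟨hA𝔅, hlo, ?_⟩, hzA⟩
    rw [ENNReal.ofReal_mul hρ0.le, mul_assoc]
    exact hhi
  have hFμB : ∀ A ∈ F, μ A ≤ μ B := by
    intro A hA
    have h1 : ENNReal.ofReal ρ * μ A ≤ ENNReal.ofReal ρ * μ B :=
      (hA.2.1.trans ((measure_mono inter_subset_left).trans hUsmall.le))
    exact (ENNReal.mul_le_mul_iff_right (ENNReal.ofReal_pos.mpr hρ0).ne' ENNReal.ofReal_ne_top).mp h1
  have hFBne : ∀ A ∈ F, (A ∩ B).Nonempty := by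
    intro A hA
    have hne : μ (U ∩ A) ≠ 0 := by
      intro h
      have h2 := hA.2.1
      rw [h] at h2
      rcases mul_eq_zero.mp (le_antisymm h2 (zero_le)) with h3 | h3
      · exact (ENNReal.ofReal_pos.mpr hρ0).ne' h3
      · exact (bb.measure_pos A hA.1).ne' h3
    obtain ⟨y, hyU, hyA⟩ := nonempty_of_measure_ne_zero hne
    exact ⟨y, hyA, hUsub hyU⟩
  have hFhB : ∀ A ∈ F, A ⊆ hull B := fun A hA =>
    bb.subset_hull B hB A hA.1
      ((hFμB A hA).trans (le_mul_of_one_le_left (zero_le) one_le_two)) (hFBne A hA)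
  obtain ⟨G, hGF, hGdisj, hGcov⟩ := vitali_sel bb F hF𝔅 (hull B)
    (bb.measure_lt_top _ (bb.hull_mem B hB)).ne hFhB
  have hGmeas : ∀ j, MeasurableSet (G j) := by
    intro j
    rcases hGF j with h | h
    · exact bb.measurableSet _ (hF𝔅 h)
    · rw [h]; exact MeasurableSet.empty
  set Z := {x | x ∈ S ∧ ∀ C ∈ 𝔅, x ∈ C → μ (U ∩ C) < ENNReal.ofReal ρ * μ C} with hZdef
  have hZ0 : μ Z = 0 := by
    by_contra hpos
    set W := toMeasurable μ Z ∩ U with hWdef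
    have hZU : Z ⊆ U := fun x hx => hSU hx.1
    have hZW : Z ⊆ W := fun x hx => ⟨subset_toMeasurable μ Z hx, hZU hx⟩
    have hWmeas : MeasurableSet W := (measurableSet_toMeasurable μ Z).inter hUmeas
    have hWμ : μ W = μ Z := le_antisymm
      ((measure_mono inter_subset_left).trans_eq (measure_toMeasurable Z)) (measure_mono hZW)
    have hW0 : μ W ≠ 0 := by rw [hWμ]; exact hpos
    have hWf : μ W ≠ ∞ := ((measure_mono inter_subset_right).trans_lt hUfin).ne
    obtain ⟨A, hA𝔅, hAle⟩ := density_ball bb hK W hWmeas hW0 hWf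
    have hWA0 : μ (W ∩ A) ≠ 0 := by
      intro h
      rw [h, mul_zero] at hAle
      exact (bb.measure_pos A hA𝔅).ne' (le_antisymm hAle (zero_le))
    have hZA : (Z ∩ A).Nonempty := by
      rw [nonempty_iff_ne_empty]
      intro hemp
      have hsub2 : Z ⊆ W \ A := by
        intro x hx
        refine ⟨hZW hx, fun hxA => ?_⟩
        exact (eq_empty_iff_forall_notMem.mp hemp x) ⟨hx, hxA⟩
      have h1 : μ W ≤ μ (W \ A) := by
        rw [hWμ]
        exact measure_mono hsub2
      have h2 : μ (W ∩ A) + μ (W \ A) = μ W := measure_inter_add_diff W (bb.measurableSet A hA𝔅)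
      have hWAfin : μ (W \ A) ≠ ∞ := ((measure_mono diff_subset).trans_lt
        (lt_top_iff_ne_top.mpr hWf)).ne
      have h4 : μ (W ∩ A) + μ (W \ A) ≤ 0 + μ (W \ A) := by
        rw [zero_add, h2]
        exact h1
      have h5 : μ (W ∩ A) ≤ 0 := (ENNReal.add_le_add_iff_right hWAfin).mp h4
      exact hWA0 (le_antisymm h5 (zero_le))
    obtain ⟨x, hxZ, hxA⟩ := hZA
    have hlt := hxZ.2 A hA𝔅 hxA
    have hchain : ENNReal.ofReal ρ * μ A ≤ μ (U ∩ A) := by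
      calc ENNReal.ofReal ρ * μ A
          ≤ ENNReal.ofReal ρ * (ENNReal.ofReal (4*K) * μ (W ∩ A)) := mul_le_mul_right hAle _
        _ = ENNReal.ofReal (ρ * (4*K)) * μ (W ∩ A) := by
            rw [ENNReal.ofReal_mul hρ0.le, mul_assoc]
        _ ≤ 1 * μ (W ∩ A) := by
            refine mul_le_mul_left ?_ _
            rw [← ENNReal.ofReal_one]
            exact ENNReal.ofReal_le_ofReal c3'
        _ = μ (W ∩ A) := one_mul _
        _ ≤ μ (U ∩ A) := measure_mono (inter_subset_inter_left _ inter_subset_right)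
    exact absurd (hlt.trans_le hchain) (lt_irrefl _)
  have hmain : ∀ δ : ℝ, 0 < δ →
      μ {y ∈ B | lam + M.toReal + δ < |g y|} ≤ ENNReal.ofReal ε * μ U := by
    intro δ hδ
    set Sd := {y ∈ B | lam + M.toReal + δ < |g y|} with hSdDef
    set Hf : ℕ → Set X := fun j => if G j ∈ F then hull (G j) else ∅ with hHfDef
    have hbadsub : Sd \ (⋃ j, Hf j) ⊆ Z := by
      rintro z ⟨hzSd, hznot⟩
      obtain ⟨hzB, hzlt⟩ := hzSd
      have hM0 : 0 ≤ M.toReal := ENNReal.toReal_nonneg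
      have hzS : z ∈ S := ⟨hzB, by linarith⟩
      refine ⟨hzS, ?_⟩
      intro C hC hzC
      by_contra hge
      push_neg at hge
      obtain ⟨A, hAF, hzA⟩ := hstop' z C hC hzC hge
      obtain ⟨j, hjF, hjne, hjle⟩ := hGcov A hAF
      have hsubj : A ⊆ hull (G j) := bb.subset_hull (G j) (hF𝔅 hjF) A (hF𝔅 hAF) hjle hjne
      refine hznot (mem_iUnion.mpr ⟨j, ?_⟩)
      rw [hHfDef]
      simp only [if_pos hjF]
      exact hsubj hzA
    have hper : ∀ j, μ (Sd ∩ Hf j) ≤ ENNReal.ofReal ((1 - α') * K) * μ (G j) := by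
      intro j
      by_cases hjF : G j ∈ F
      · have hGj𝔅 : G j ∈ 𝔅 := hF𝔅 hjF
        have hH𝔅 : hull (G j) ∈ 𝔅 := bb.hull_mem _ hGj𝔅
        have hreg : ENNReal.ofReal θ * μ (hull (G j)) ≤ μ (hull (G j) ∩ B) :=
          rb B hB (G j) hGj𝔅 (hFμB _ hjF) (hFBne _ hjF)
        have hupper : μ (U ∩ hull (G j)) ≤ ENNReal.ofReal (θ/2) * μ (hull (G j)) := by
          refine hjF.2.2.trans ?_
          calc ENNReal.ofReal (ρ * g0) * μ (G j) ≤ ENNReal.ofReal (θ/2) * μ (G j) :=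
                mul_le_mul_left (ENNReal.ofReal_le_ofReal c2') _
            _ ≤ ENNReal.ofReal (θ/2) * μ (hull (G j)) :=
                mul_le_mul_right (measure_mono (bb_sub_hull bb hGj𝔅)) _
        have hoscle : oscBeta μ g (hull (G j)) α' ≤ M := by
          rw [hMdef]
          exact le_iSup₂ (f := fun (B' : Set X) (_ : B' ∈ 𝔅) => oscBeta μ g B' α')
            (hull (G j)) hH𝔅
        have hlt : oscBeta μ g (hull (G j)) α' < M + ENNReal.ofReal δ :=
          hoscle.trans_lt (ENNReal.lt_add_right hMfin (ENNReal.ofReal_pos.mpr hδ).ne')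
        unfold oscBeta at hlt
        rw [iInf_lt_iff] at hlt
        obtain ⟨E, hE⟩ := hlt
        rw [iInf_lt_iff] at hE
        obtain ⟨⟨hEmeas, hEH, hEμ⟩, hEosc⟩ := hE
        have hoscpt : ∀ z ∈ E, ∀ y ∈ E, |g z - g y| ≤ M.toReal + δ := by
          intro z hz y hy
          have h1 : ENNReal.ofReal |g z - g y| ≤ oscSup g E := by
            unfold oscSup
            exact le_iSup_of_le z (le_iSup_of_le hz (le_iSup_of_le y (le_iSup_of_le hy le_rfl)))
          have h2 : oscSup g E ≤ ENNReal.ofReal (M.toReal + δ) := by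
            refine hEosc.le.trans ?_
            rw [ENNReal.ofReal_add ENNReal.toReal_nonneg hδ.le, ENNReal.ofReal_toReal hMfin]
          exact (ENNReal.ofReal_le_ofReal_iff (add_nonneg ENNReal.toReal_nonneg hδ.le)).mp
            (h1.trans h2)
        have hS' : ∀ y, y ∈ B → lam < |g y| → y ∈ U := fun y hyB hyg => hSU ⟨hyB, hyg⟩
        have hstep := osc_step bb hB hH𝔅 hUmeas hS' hreg hupper hEmeas hEH hEμ hoscpt c9 c7 hθ.le
        calc μ (Sd ∩ Hf j) = μ (Sd ∩ hull (G j)) := by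
              rw [hHfDef]; simp only [if_pos hjF]
          _ ≤ ENNReal.ofReal (1 - α') * μ (hull (G j)) := by
              rw [hSdDef]; exact hstep
          _ ≤ ENNReal.ofReal (1 - α') * (ENNReal.ofReal K * μ (G j)) :=
              mul_le_mul_right (bb.hull_measure _ hGj𝔅) _
          _ = ENNReal.ofReal ((1 - α') * K) * μ (G j) := by
              rw [← mul_assoc, ← ENNReal.ofReal_mul h1α0]
      · rw [hHfDef]
        simp only [if_neg hjF, inter_empty, measure_empty]
        exact zero_le
    have hρsum : ENNReal.ofReal ρ * ∑' j, μ (G j) ≤ μ U := by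
      have hdisj2 : Pairwise (Function.onFun Disjoint (fun j => U ∩ G j)) :=
        fun i j hij => ((hGdisj hij).mono inter_subset_right inter_subset_right)
      calc ENNReal.ofReal ρ * ∑' j, μ (G j) = ∑' j, ENNReal.ofReal ρ * μ (G j) :=
            ENNReal.tsum_mul_left.symm
        _ ≤ ∑' j, μ (U ∩ G j) := by
            refine ENNReal.tsum_le_tsum fun j => ?_
            rcases hGF j with h | h
            · exact h.2.1
            · rw [h]; simp
        _ = μ (⋃ j, U ∩ G j) :=
            (measure_iUnion hdisj2 (fun j => hUmeas.inter (hGmeas j))).symm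
        _ ≤ μ U := measure_mono (iUnion_subset fun j => inter_subset_left)
    calc μ Sd ≤ μ ((⋃ j, Sd ∩ Hf j) ∪ (Sd \ ⋃ j, Hf j)) := by
          refine measure_mono ?_
          intro z hz
          by_cases h : z ∈ ⋃ j, Hf j
          · obtain ⟨j, hj⟩ := mem_iUnion.mp h
            exact Or.inl (mem_iUnion.mpr ⟨j, hz, hj⟩)
          · exact Or.inr ⟨hz, h⟩
      _ ≤ μ (⋃ j, Sd ∩ Hf j) + μ (Sd \ ⋃ j, Hf j) := measure_union_le _ _
      _ ≤ μ (⋃ j, Sd ∩ Hf j) + 0 := by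
          refine add_le_add_right ?_ _
          rw [measure_mono_null hbadsub hZ0]
      _ = μ (⋃ j, Sd ∩ Hf j) := by rw [add_zero]
      _ ≤ ∑' j, μ (Sd ∩ Hf j) := measure_iUnion_le _
      _ ≤ ∑' j, ENNReal.ofReal ((1 - α') * K) * μ (G j) := ENNReal.tsum_le_tsum hper
      _ = ENNReal.ofReal ((1 - α') * K) * ∑' j, μ (G j) := ENNReal.tsum_mul_left
      _ = ENNReal.ofReal ε * (ENNReal.ofReal (θ/(4*γ^2)) * ∑' j, μ (G j)) := by
          rw [c8, ENNReal.ofReal_mul hε0.le, mul_assoc]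
      _ ≤ ENNReal.ofReal ε * (ENNReal.ofReal ρ * ∑' j, μ (G j)) :=
          mul_le_mul_right (mul_le_mul_left (ENNReal.ofReal_le_ofReal c5) _) _
      _ ≤ ENNReal.ofReal ε * μ U := mul_le_mul_right hρsum _
  have hT : {x ∈ B | lam + M.toReal < |g x|} ⊆
      ⋃ n : ℕ, {y ∈ B | lam + M.toReal + 1/((n:ℝ)+1) < |g y|} := by
    rintro z ⟨hzB, hz⟩
    obtain ⟨n, hn⟩ := exists_nat_one_div_lt (show (0:ℝ) < |g z| - (lam + M.toReal) by linarith)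
    refine mem_iUnion.mpr ⟨n, hzB, by linarith⟩
  have hdir : Directed (· ⊆ ·) (fun n : ℕ => {y ∈ B | lam + M.toReal + 1/((n:ℝ)+1) < |g y|}) := by
    refine Monotone.directed_le ?_
    intro a b hab z hz
    obtain ⟨hzB, hzlt⟩ := hz
    have hle : (1:ℝ)/((b:ℝ)+1) ≤ 1/((a:ℝ)+1) := by
      apply one_div_le_one_div_of_le
      · positivity
      · have : (a:ℝ) ≤ (b:ℝ) := Nat.cast_le.mpr hab
        linarith
    exact ⟨hzB, by linarith⟩
  calc μ {x ∈ B | lam + M.toReal < |g x|}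
      ≤ μ (⋃ n : ℕ, {y ∈ B | lam + M.toReal + 1/((n:ℝ)+1) < |g y|}) := measure_mono hT
    _ = ⨆ n : ℕ, μ {y ∈ B | lam + M.toReal + 1/((n:ℝ)+1) < |g y|} :=
        hdir.measure_iUnion
    _ ≤ ENNReal.ofReal ε * μ U := iSup_le fun n => hmain (1/((n:ℝ)+1)) (by positivity)
    _ = ENNReal.ofReal ε * μ S := by rw [hUμ]
end

section
/- Let (X, 𝓜, μ) be a measure space equipped with a ball-basis 𝔅. Then 𝔅 satisfies the density property: for every measurable set E ∈ 𝓜, the set of points x ∈ E that are not density points of E has outer measure zero, i.e. μ*({x ∈ E : x is not a density point of E}) = 0. Here x ∈ E is a density point of E if for every ε > 0 there exists a ball B ∈ 𝔅 with x ∈ B and μ(B ∩ E) > (1 − ε) μ(B). -/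
open MeasureTheory Set
open scoped ENNReal NNReal symmDiff

variable {X : Type*}

/-- `x` is a density point of `E` with respect to the ball-basis `𝔅`. -/
def IsDensityPoint {X : Type*} [MeasurableSpace X] (μ : Measure X) (𝔅 : Set (Set X))
    (E : Set X) (x : X) : Prop :=
  ∀ ε : ℝ, 0 < ε → ∃ B ∈ 𝔅, x ∈ B ∧ ENNReal.ofReal (1 - ε) * μ B < μ (B ∩ E)


private theorem density_core
    {X : Type*} [MeasurableSpace X] (μ : Measure X) (𝔅 : Set (Set X))
    (hull : Set X → Set X) (K : ℝ)
    (hbasis : IsBallBasis μ 𝔅 hull K)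
    (E : Set X) (hE : MeasurableSet E) (ε : ℝ) (hε0 : 0 < ε) (hε1 : ε ≤ 1) :
    μ {x ∈ E | ∀ B ∈ 𝔅, x ∈ B → μ (B ∩ E) ≤ ENNReal.ofReal (1 - ε) * μ B} = 0 := by
  set A := {x ∈ E | ∀ B ∈ 𝔅, x ∈ B → μ (B ∩ E) ≤ ENNReal.ofReal (1 - ε) * μ B} with hA
  have hAE : A ⊆ E := fun x hx => hx.1
  have hεne : ENNReal.ofReal ε ≠ 0 := by
    simpa [ENNReal.ofReal_eq_zero, not_le] using hε0
  have hεfin : ENNReal.ofReal ε ≠ ∞ := ENNReal.ofReal_ne_top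
  set C : ℝ≥0∞ := 1 + ENNReal.ofReal K / ENNReal.ofReal ε with hC
  have hC0 : C ≠ 0 := by
    simp [hC, add_eq_zero]
  have hCfin : C ≠ ∞ := by
    have : ENNReal.ofReal K / ENNReal.ofReal ε < ∞ :=
      ENNReal.div_lt_top ENNReal.ofReal_ne_top hεne
    simp [hC, this.ne, ENNReal.add_ne_top]
  refine le_antisymm ?_ zero_le
  refine ENNReal.le_of_forall_pos_le_add fun η hη _ => ?_
  rw [zero_add]
  set δ0 : ℝ≥0∞ := (η : ℝ≥0∞) / C with hδ0
  have hδ0pos : 0 < δ0 := ENNReal.div_pos (by exact_mod_cast hη.ne') hCfin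
  have hδ0fin : δ0 ≠ ∞ := by
    refine (ENNReal.div_lt_top (by simp) hC0).ne
  -- measurable envelope inside E
  set G : Set X := toMeasurable μ A ∩ E with hG
  have hGmeas : MeasurableSet G := (measurableSet_toMeasurable μ A).inter hE
  have hAG : A ⊆ G := subset_inter (subset_toMeasurable μ A) hAE
  have hGE : G ⊆ E := inter_subset_right
  obtain ⟨𝒞, h𝒞𝔅, h𝒞c, h𝒞approx⟩ := hbasis.approx G hGmeas δ0 hδ0pos
  set U : Set X := ⋃₀ 𝒞 with hU
  have hGU : μ (G \ U) < δ0 :=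
    lt_of_le_of_lt (measure_mono (by rw [symmDiff_def]; exact le_sup_left)) h𝒞approx
  have hUG : μ (U \ G) < δ0 :=
    lt_of_le_of_lt (measure_mono (by rw [symmDiff_def]; exact le_sup_right)) h𝒞approx
  -- relevant family of balls
  set t : Set (Set X) := {B | B ∈ 𝒞 ∧ (B ∩ A).Nonempty} with ht
  have ht𝔅 : ∀ B ∈ t, B ∈ 𝔅 := fun B hB => h𝒞𝔅 hB.1
  have htU : ∀ B ∈ t, B ⊆ U := fun B hB => subset_sUnion_of_mem hB.1
  have htfin : ∀ B ∈ t, μ B ≠ ∞ := fun B hB => (hbasis.measure_lt_top B (ht𝔅 B hB)).ne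
  -- each ball in t loses an ε-fraction to the complement of G
  have hkey : ∀ B ∈ t, ENNReal.ofReal ε * μ B ≤ μ (B \ G) := by
    intro B hB
    obtain ⟨x, hxB, hxA⟩ := hB.2
    have hBE : μ (B ∩ E) ≤ ENNReal.ofReal (1 - ε) * μ B := hxA.2 B (ht𝔅 B hB) hxB
    have hsplit : μ (B ∩ E) + μ (B \ E) = μ B := measure_inter_add_diff B hE
    have hone : ENNReal.ofReal ε * μ B + ENNReal.ofReal (1 - ε) * μ B = μ B := by
      rw [← add_mul, ← ENNReal.ofReal_add hε0.le (by linarith)]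
      norm_num
    have hBEfin : μ (B ∩ E) ≠ ∞ :=
      (lt_of_le_of_lt (measure_mono inter_subset_left)
        (hbasis.measure_lt_top B (ht𝔅 B hB))).ne
    have h1 : ENNReal.ofReal ε * μ B + μ (B ∩ E) ≤ μ (B \ E) + μ (B ∩ E) := by
      calc ENNReal.ofReal ε * μ B + μ (B ∩ E)
          ≤ ENNReal.ofReal ε * μ B + ENNReal.ofReal (1 - ε) * μ B := by gcongr
        _ = μ B := hone
        _ = μ (B \ E) + μ (B ∩ E) := by rw [add_comm, hsplit]
    have h2 : ENNReal.ofReal ε * μ B ≤ μ (B \ E) :=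
      (ENNReal.add_le_add_iff_right hBEfin).mp h1
    exact h2.trans (measure_mono (diff_subset_diff_right hGE))
  -- uniform size bound
  have hsize : ∀ B ∈ t, μ B ≤ δ0 / ENNReal.ofReal ε := by
    intro B hB
    rw [ENNReal.le_div_iff_mul_le (Or.inl hεne) (Or.inl hεfin), mul_comm]
    exact (hkey B hB).trans ((measure_mono (diff_subset_diff_left (htU B hB))).trans hUG.le)
  -- Vitali selection
  obtain ⟨u, hut, hdisj, hcov⟩ :=
    Vitali.exists_disjoint_subfamily_covering_enlargement (id : Set X → Set X) t
      (fun B => (μ B).toReal) 2 one_lt_two (fun a _ => ENNReal.toReal_nonneg)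
      ((δ0 / ENNReal.ofReal ε).toReal)
      (fun a ha => ENNReal.toReal_mono
        ((ENNReal.div_lt_top hδ0fin hεne).ne) (hsize a ha))
      (fun a ha => ha.2.mono inter_subset_left |>.mono Subset.rfl)
  have hu𝔅 : ∀ b ∈ u, b ∈ 𝔅 := fun b hb => ht𝔅 b (hut hb)
  have hucount : u.Countable := h𝒞c.mono (hut.trans fun B hB => hB.1)
  -- every relevant ball is inside the hull of a selected ball
  have hhull : ∀ a ∈ t, ∃ b ∈ u, a ⊆ hull b := by
    intro a ha
    obtain ⟨b, hbu, hba, hle⟩ := hcov a ha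
    refine ⟨b, hbu, hbasis.subset_hull b (hu𝔅 b hbu) a (ht𝔅 a ha) ?_ hba⟩
    have h2b : (2 : ℝ≥0∞) * μ b ≠ ∞ := by
      simp [ENNReal.mul_ne_top, htfin b (hut hbu)]
    rw [← ENNReal.toReal_le_toReal (htfin a ha) h2b]
    simpa [ENNReal.toReal_mul] using hle
  -- coverage of A
  have hAcov : A ⊆ (G \ U) ∪ ⋃ b ∈ u, hull b := by
    intro x hx
    by_cases hxU : x ∈ U
    · obtain ⟨B, hB𝒞, hxB⟩ := hxU
      have hBt : B ∈ t := ⟨hB𝒞, ⟨x, hxB, hx⟩⟩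
      obtain ⟨b, hbu, hsub⟩ := hhull B hBt
      exact Or.inr (mem_biUnion hbu (hsub hxB))
    · exact Or.inl ⟨hAG hx, hxU⟩
  -- sum of measures of selected balls
  have hsum : ENNReal.ofReal ε * ∑' b : u, μ (b : Set X) ≤ δ0 := by
    have hdisj' : u.PairwiseDisjoint (fun b : Set X => b \ G) := by
      intro a hau b hbu hab
      exact (hdisj hau hbu hab).mono diff_subset diff_subset
    have hmeas : ∀ b ∈ u, MeasurableSet (b \ G) := fun b hb =>
      (hbasis.measurableSet b (hu𝔅 b hb)).diff hGmeas
    have : ∑' b : u, μ ((b : Set X) \ G) = μ (⋃ b ∈ u, b \ G) :=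
      (measure_biUnion hucount hdisj' hmeas).symm
    calc ENNReal.ofReal ε * ∑' b : u, μ (b : Set X)
        = ∑' b : u, ENNReal.ofReal ε * μ (b : Set X) := ENNReal.tsum_mul_left.symm
      _ ≤ ∑' b : u, μ ((b : Set X) \ G) :=
          ENNReal.tsum_le_tsum fun b => hkey b (hut b.2)
      _ = μ (⋃ b ∈ u, b \ G) := this
      _ ≤ μ (U \ G) := measure_mono (iUnion₂_subset fun b hb =>
          diff_subset_diff_left (htU b (hut hb)))
      _ ≤ δ0 := hUG.le
  have hsum' : ∑' b : u, μ (b : Set X) ≤ δ0 / ENNReal.ofReal ε := by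
    rw [ENNReal.le_div_iff_mul_le (Or.inl hεne) (Or.inl hεfin), mul_comm]
    exact hsum
  -- final bound
  calc μ A ≤ μ ((G \ U) ∪ ⋃ b ∈ u, hull b) := measure_mono hAcov
    _ ≤ μ (G \ U) + μ (⋃ b ∈ u, hull b) := measure_union_le _ _
    _ ≤ δ0 + ∑' b : u, μ (hull (b : Set X)) :=
        add_le_add hGU.le (measure_biUnion_le μ hucount _)
    _ ≤ δ0 + ∑' b : u, ENNReal.ofReal K * μ (b : Set X) := by
        gcongr with b
        exact hbasis.hull_measure b (hu𝔅 b b.2)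
    _ = δ0 + ENNReal.ofReal K * ∑' b : u, μ (b : Set X) := by rw [ENNReal.tsum_mul_left]
    _ ≤ δ0 + ENNReal.ofReal K * (δ0 / ENNReal.ofReal ε) := by gcongr
    _ = δ0 * C := by
        rw [hC, mul_add, mul_one]
        congr 1
        rw [div_eq_mul_inv, div_eq_mul_inv]
        ring
    _ = η := by rw [hδ0, ENNReal.div_mul_cancel hC0 hCfin]

theorem density_property
    {X : Type*} [MeasurableSpace X] (μ : Measure X) (𝔅 : Set (Set X))
    (hull : Set X → Set X) (K : ℝ) (hK : 0 < K)
    (hbasis : IsBallBasis μ 𝔅 hull K)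
    (E : Set X) (hE : MeasurableSet E) :
    μ {x ∈ E | ¬ IsDensityPoint μ 𝔅 E x} = 0 := by
  set A : ℕ → Set X := fun n =>
    {x ∈ E | ∀ B ∈ 𝔅, x ∈ B → μ (B ∩ E) ≤ ENNReal.ofReal (1 - 1 / (n + 1)) * μ B} with hA
  have hcov : {x ∈ E | ¬ IsDensityPoint μ 𝔅 E x} ⊆ ⋃ n, A n := by
    intro x hx
    obtain ⟨hxE, hxn⟩ := hx
    rw [IsDensityPoint] at hxn
    push_neg at hxn
    obtain ⟨ε, hε0, hεB⟩ := hxn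
    obtain ⟨n, hn⟩ := exists_nat_one_div_lt hε0
    refine mem_iUnion.mpr ⟨n, hxE, fun B hB hxB => ?_⟩
    have h1 : μ (B ∩ E) ≤ ENNReal.ofReal (1 - ε) * μ B := hεB B hB hxB
    refine h1.trans (mul_le_mul_left (ENNReal.ofReal_le_ofReal (by linarith [hn.le])) _)
  have hzero : ∀ n : ℕ, μ (A n) = 0 := by
    intro n
    have h0 : (0 : ℝ) < 1 / ((n : ℝ) + 1) := by positivity
    have h1 : (1 : ℝ) / ((n : ℝ) + 1) ≤ 1 := by
      rw [div_le_one (by positivity)]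
      linarith [Nat.cast_nonneg (α := ℝ) n]
    exact density_core μ 𝔅 hull K hbasis E hE _ h0 h1
  refine le_antisymm ?_ zero_le
  calc μ _ ≤ μ (⋃ n, A n) := measure_mono hcov
    _ ≤ ∑' n, μ (A n) := measure_iUnion_le A
    _ = 0 := by simp [hzero]
end

section
/- Let (X, 𝓜, μ) be a measure space equipped with a ball-basis 𝔅 and fix 1 ≤ r < ∞. Then there is an admissible constant c such that for every f ∈ L^r_loc(X) and all balls A, B ∈ 𝔅 with A ∩ B ≠ ∅ and μ(A) ≤ μ(B), one has |f_A − f_B| ≤ c · (μ(B)/μ(A))^{1/r} · ⟨f⟩*_{#,A}. -/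
open MeasureTheory Set
open scoped ENNReal NNReal symmDiff

variable {X : Type*}

/-- membership in `L^r_loc(X)`. -/
def MemLrLoc [MeasurableSpace X] (μ : Measure X) (𝔅 : Set (Set X)) (r : ℝ) (f : X → ℝ) : Prop :=
  AEMeasurable f μ ∧ ∀ B ∈ 𝔅, (∫⁻ x in B, ENNReal.ofReal |f x| ^ r ∂μ) < ∞

private lemma l1_le_lr {X : Type} [MeasurableSpace X] (ν : Measure X) {r : ℝ} (hr : 1 ≤ r)
    {g : X → ℝ≥0∞} (hg : AEMeasurable g ν) :
    ∫⁻ x, g x ∂ν ≤ (∫⁻ x, g x ^ r ∂ν) ^ (1 / r) * (ν Set.univ) ^ (1 - 1 / r) := by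
  rcases eq_or_lt_of_le hr with h1 | h1
  · simp [← h1]
  · have hpq : r.HolderConjugate (Real.conjExponent r) := Real.HolderConjugate.conjExponent h1
    have h := ENNReal.lintegral_mul_le_Lp_mul_Lq ν hpq hg
        (aemeasurable_const (b := (1 : ℝ≥0∞)))
    simp only [Pi.mul_apply, mul_one, ENNReal.one_rpow, lintegral_one] at h
    have he : 1 / Real.conjExponent r = 1 - 1 / r := by
      rw [one_div, one_div, ← hpq.one_sub_inv]
    rwa [he] at h

private lemma key_step {X : Type} [MeasurableSpace X] (μ : Measure X) {r : ℝ} (hr : 1 ≤ r)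
    {f : X → ℝ} (hf : AEMeasurable f μ) {A C : Set X} (hAC : A ⊆ C)
    (hA0 : μ A ≠ 0) (hAt : μ A ≠ ∞) (hC0 : μ C ≠ 0) (hCt : μ C ≠ ∞)
    (hfC : (∫⁻ x in C, ENNReal.ofReal |f x| ^ r ∂μ) < ∞) :
    ENNReal.ofReal |mean μ f A - mean μ f C| ≤ (μ C / μ A) ^ (1 / r) * sharpNorm μ r f C := by
  have hr0 : (0:ℝ) < r := lt_of_lt_of_le one_pos hr
  have hr0' : (0:ℝ) ≤ 1 / r := by positivity
  set c := mean μ f C with hc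
  set g : X → ℝ≥0∞ := fun x => ENNReal.ofReal |f x - c| with hgdef
  -- integrability of f on A
  have h1r : (0:ℝ) ≤ 1 - 1 / r := by
    rw [sub_nonneg, div_le_one hr0]; exact hr
  have habs : AEMeasurable (fun x => ENNReal.ofReal |f x|) μ :=
    (continuous_abs.measurable.comp_aemeasurable hf).ennreal_ofReal
  have hiA : IntegrableOn f A μ := by
    refine ⟨hf.aestronglyMeasurable.restrict, ?_⟩
    have h1 : ∫⁻ x, ENNReal.ofReal |f x| ∂(μ.restrict A) ≤
        (∫⁻ x, ENNReal.ofReal |f x| ^ r ∂(μ.restrict A)) ^ (1 / r) * (μ A) ^ (1 - 1 / r) := by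
      have := l1_le_lr (μ.restrict A) hr habs.restrict
      rwa [Measure.restrict_apply_univ] at this
    have h2 : (∫⁻ x in A, ENNReal.ofReal |f x| ^ r ∂μ) < ∞ :=
      lt_of_le_of_lt (lintegral_mono_set hAC) hfC
    have h3 : ∫⁻ x, (‖f x‖₊ : ℝ≥0∞) ∂(μ.restrict A)
        = ∫⁻ x, ENNReal.ofReal |f x| ∂(μ.restrict A) := by
      simp_rw [← enorm_eq_nnnorm, Real.enorm_eq_ofReal_abs]
    show (∫⁻ x, (‖f x‖₊ : ℝ≥0∞) ∂(μ.restrict A)) < ∞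
    rw [h3]
    exact lt_of_le_of_lt h1 (ENNReal.mul_lt_top
      (ENNReal.rpow_lt_top_of_nonneg hr0' h2.ne)
      (ENNReal.rpow_lt_top_of_nonneg h1r hAt))
  have hconst : IntegrableOn (fun _ => c) A μ := integrableOn_const hAt
  have htA : (0:ℝ) < (μ A).toReal := ENNReal.toReal_pos hA0 hAt
  have hmean : mean μ f A - c = (∫ x in A, (f x - c) ∂μ) / (μ A).toReal := by
    rw [integral_sub hiA hconst, integral_const, measureReal_restrict_apply_univ, Measure.real, smul_eq_mul, mean]
    field_simp
  -- bound the mean difference by the lintegral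
  have hisub : IntegrableOn (fun x => f x - c) A μ := hiA.sub hconst
  have hmb : ENNReal.ofReal |mean μ f A - c| ≤ (∫⁻ x in A, g x ∂μ) / μ A := by
    rw [hmean]
    have h1 : |(∫ x in A, (f x - c) ∂μ) / (μ A).toReal|
        ≤ (∫ x in A, |f x - c| ∂μ) / (μ A).toReal := by
      rw [abs_div, abs_of_pos htA]
      gcongr
      simpa using norm_integral_le_integral_norm (μ := μ.restrict A) (fun x => f x - c)
    refine le_trans (ENNReal.ofReal_le_ofReal h1) ?_
    rw [ENNReal.ofReal_div_of_pos htA,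
      ofReal_integral_eq_lintegral_ofReal hisub.abs
        (Filter.Eventually.of_forall fun x => abs_nonneg _),
      ENNReal.ofReal_toReal hAt]
  -- Hölder on A
  have hgmeas : AEMeasurable g μ :=
    (continuous_abs.measurable.comp_aemeasurable (hf.sub aemeasurable_const)).ennreal_ofReal
  set I := ∫⁻ x in C, g x ^ r ∂μ with hIdef
  have hhold : (∫⁻ x in A, g x ∂μ) ≤ I ^ (1 / r) * (μ A) ^ (1 - 1 / r) := by
    have h1 := l1_le_lr (μ.restrict A) hr hgmeas.restrict
    rw [Measure.restrict_apply_univ] at h1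
    exact h1.trans (mul_le_mul_left
      (ENNReal.rpow_le_rpow (lintegral_mono_set hAC) hr0') _)
  have hAr0 : (μ A) ^ (1/r) ≠ 0 := (ENNReal.rpow_pos (hA0.bot_lt) hAt).ne'
  have hArt : (μ A) ^ (1/r) ≠ ∞ := (ENNReal.rpow_lt_top_of_nonneg hr0' hAt).ne
  have hsum : (μ A) ^ (1/r) * (μ A) ^ (1 - 1/r) = μ A := by
    rw [← ENNReal.rpow_add _ _ hA0 hAt]; norm_num
  have hiden : I ^ (1/r) / (μ A) ^ (1/r) * μ A = I ^ (1/r) * (μ A) ^ (1 - 1/r) := by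
    nth_rewrite 2 [← hsum]
    rw [div_eq_mul_inv]
    calc I ^ (1/r) * ((μ A) ^ (1/r))⁻¹ * ((μ A) ^ (1/r) * (μ A) ^ (1 - 1/r))
        = I ^ (1/r) * (μ A) ^ (1 - 1/r) * ((μ A) ^ (1/r) * ((μ A) ^ (1/r))⁻¹) := by ring
      _ = I ^ (1/r) * (μ A) ^ (1 - 1/r) := by
          rw [ENNReal.mul_inv_cancel hAr0 hArt, mul_one]
  have key : (∫⁻ x in A, g x ∂μ) / μ A ≤ I ^ (1/r) / (μ A) ^ (1/r) := by
    rw [ENNReal.div_le_iff hA0 hAt, hiden]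
    exact hhold
  have hSN : sharpNorm μ r f C = (I / μ C) ^ (1/r) := by
    simp only [sharpNorm, avgNorm, hIdef, hgdef, hc]
  have hrhs : (μ C / μ A) ^ (1 / r) * ((I / μ C) ^ (1/r)) = I ^ (1/r) / (μ A) ^ (1/r) := by
    rw [← ENNReal.mul_rpow_of_nonneg _ _ hr0']
    have : μ C / μ A * (I / μ C) = I / μ A := by
      rw [div_eq_mul_inv, div_eq_mul_inv, div_eq_mul_inv]
      calc μ C * (μ A)⁻¹ * (I * (μ C)⁻¹) = I * (μ A)⁻¹ * (μ C * (μ C)⁻¹) := by ring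
        _ = I * (μ A)⁻¹ := by rw [ENNReal.mul_inv_cancel hC0 hCt, mul_one]
    rw [this, ENNReal.div_rpow_of_nonneg _ _ hr0']
  calc ENNReal.ofReal |mean μ f A - c| ≤ (∫⁻ x in A, g x ∂μ) / μ A := hmb
    _ ≤ I ^ (1/r) / (μ A) ^ (1/r) := key
    _ = (μ C / μ A) ^ (1 / r) * sharpNorm μ r f C := by rw [hSN, hrhs]

theorem mean_diff_bound (K r : ℝ) (hK : 0 < K) (hr : 1 ≤ r) :
    ∃ c : ℝ≥0∞, 0 < c ∧ c ≠ ∞ ∧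
      ∀ (X : Type) (_ : MeasurableSpace X) (μ : Measure X)
        (𝔅 : Set (Set X)) (hull : Set X → Set X),
        IsBallBasis μ 𝔅 hull K →
        ∀ f : X → ℝ, MemLrLoc μ 𝔅 r f →
          ∀ A ∈ 𝔅, ∀ B ∈ 𝔅, (A ∩ B).Nonempty → μ A ≤ μ B →
            ENNReal.ofReal |mean μ f A - mean μ f B| ≤
              c * (μ B / μ A) ^ (1 / r) * sharpStar μ 𝔅 r f A := by
  have hr0 : (0:ℝ) < r := lt_of_lt_of_le one_pos hr
  have hr0' : (0:ℝ) ≤ 1 / r := by positivity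
  refine ⟨2 * ENNReal.ofReal (max K 1), ?_, ?_, ?_⟩
  · exact ENNReal.mul_pos (by norm_num) (ENNReal.ofReal_pos.2 (by positivity)).ne'
  · exact ENNReal.mul_ne_top (by norm_num) ENNReal.ofReal_ne_top
  · intro Y _ μ 𝔅 hull hbasis f hf A hA B hB hAB hμ
    set C := hull B with hCdef
    have hC𝔅 : C ∈ 𝔅 := hbasis.hull_mem B hB
    have hA0 : μ A ≠ 0 := (hbasis.measure_pos A hA).ne'
    have hAt : μ A ≠ ∞ := (hbasis.measure_lt_top A hA).ne
    have hB0 : μ B ≠ 0 := (hbasis.measure_pos B hB).ne'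
    have hBt : μ B ≠ ∞ := (hbasis.measure_lt_top B hB).ne
    have hC0 : μ C ≠ 0 := (hbasis.measure_pos C hC𝔅).ne'
    have hCt : μ C ≠ ∞ := (hbasis.measure_lt_top C hC𝔅).ne
    have h2B : μ B ≤ 2 * μ B := le_mul_of_one_le_left zero_le one_le_two
    have hAC : A ⊆ C := hbasis.subset_hull B hB A hA (hμ.trans h2B) hAB
    obtain ⟨x, hxA, hxB⟩ := hAB
    have hBC : B ⊆ C := hbasis.subset_hull B hB B hB h2B ⟨x, hxB, hxB⟩
    have hfC : (∫⁻ x in C, ENNReal.ofReal |f x| ^ r ∂μ) < ∞ := hf.2 C hC𝔅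
    have k1 := key_step μ hr hf.1 hAC hA0 hAt hC0 hCt hfC
    have k2 := key_step μ hr hf.1 hBC hB0 hBt hC0 hCt hfC
    set S := sharpNorm μ r f C with hSdef
    have htri : ENNReal.ofReal |mean μ f A - mean μ f B| ≤
        ENNReal.ofReal |mean μ f A - mean μ f C| + ENNReal.ofReal |mean μ f B - mean μ f C| := by
      rw [← ENNReal.ofReal_add (abs_nonneg _) (abs_nonneg _)]
      refine ENNReal.ofReal_le_ofReal ?_
      calc |mean μ f A - mean μ f B|
          ≤ |mean μ f A - mean μ f C| + |mean μ f C - mean μ f B| := abs_sub_le _ _ _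
        _ = |mean μ f A - mean μ f C| + |mean μ f B - mean μ f C| := by
            rw [abs_sub_comm (mean μ f C)]
    have h2 : (μ C / μ B) ^ (1/r) ≤ (μ C / μ A) ^ (1/r) :=
      ENNReal.rpow_le_rpow (ENNReal.div_le_div_left hμ _) hr0'
    have hM1 : (1:ℝ≥0∞) ≤ ENNReal.ofReal (max K 1) := by
      rw [← ENNReal.ofReal_one]
      exact ENNReal.ofReal_le_ofReal (le_max_right K 1)
    have hDbound : (μ C / μ A) ^ (1/r) ≤ ENNReal.ofReal (max K 1) * (μ B / μ A) ^ (1/r) := by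
      have hCK : μ C ≤ ENNReal.ofReal (max K 1) * μ B :=
        (hbasis.hull_measure B hB).trans
          (mul_le_mul_left (ENNReal.ofReal_le_ofReal (le_max_left K 1)) _)
      have h3 : μ C / μ A ≤ ENNReal.ofReal (max K 1) * (μ B / μ A) := by
        rw [← mul_div_assoc]
        exact ENNReal.div_le_div_right hCK _
      calc (μ C / μ A) ^ (1/r) ≤ (ENNReal.ofReal (max K 1) * (μ B / μ A)) ^ (1/r) :=
            ENNReal.rpow_le_rpow h3 hr0'
        _ = (ENNReal.ofReal (max K 1)) ^ (1/r) * (μ B / μ A) ^ (1/r) :=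
            ENNReal.mul_rpow_of_nonneg _ _ hr0'
        _ ≤ ENNReal.ofReal (max K 1) * (μ B / μ A) ^ (1/r) := by
            refine mul_le_mul_left ?_ _
            calc (ENNReal.ofReal (max K 1)) ^ (1/r)
                ≤ (ENNReal.ofReal (max K 1)) ^ (1:ℝ) :=
                  ENNReal.rpow_le_rpow_of_exponent_le hM1 (by rw [div_le_one hr0]; exact hr)
              _ = ENNReal.ofReal (max K 1) := ENNReal.rpow_one _
    have hSstar : S ≤ sharpStar μ 𝔅 r f A :=
      le_iSup_of_le C (le_iSup_of_le ⟨hC𝔅, hAC⟩ le_rfl)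
    calc ENNReal.ofReal |mean μ f A - mean μ f B|
        ≤ (μ C / μ A) ^ (1/r) * S + (μ C / μ B) ^ (1/r) * S := htri.trans (add_le_add k1 k2)
      _ ≤ (μ C / μ A) ^ (1/r) * S + (μ C / μ A) ^ (1/r) * S :=
          add_le_add le_rfl (mul_le_mul_left h2 _)
      _ = 2 * ((μ C / μ A) ^ (1/r) * S) := by ring
      _ ≤ 2 * (ENNReal.ofReal (max K 1) * (μ B / μ A) ^ (1/r) * sharpStar μ 𝔅 r f A) :=
          mul_le_mul_right (mul_le_mul' hDbound hSstar) 2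
      _ = 2 * ENNReal.ofReal (max K 1) * (μ B / μ A) ^ (1 / r) * sharpStar μ 𝔅 r f A := by
          ring
end

section
/- Let (X, 𝓜, μ) be a measure space equipped with a doubling ball-basis 𝔅 and fix 1 ≤ r < ∞. Then there is an admissible constant c such that for every f ∈ L^r_loc(X) and all balls A, B ∈ 𝔅 with A ∩ B ≠ ∅ and μ(A) ≤ μ(B), one has ⟨f − f_A⟩_B ≤ c · (1 + log₂(μ(B)/μ(A))) · ⟨f⟩*_{#,A}. -/
open MeasureTheory Set
open scoped ENNReal NNReal symmDiff

variable {X : Type*}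

section OscHelpers

variable {X : Type} [MeasurableSpace X] {μ : Measure X} {r : ℝ}

private lemma rpow_div_ne_zero {d : ℝ≥0∞} (hd0 : d ≠ 0) (hdt : d ≠ ∞) (s : ℝ) :
    d ^ s ≠ 0 :=
  (ENNReal.rpow_pos (pos_iff_ne_zero.2 hd0) hdt).ne'

private lemma rpow_div_ne_top {d : ℝ≥0∞} (hdt : d ≠ ∞) {s : ℝ} (hs : 0 ≤ s) :
    d ^ s ≠ ∞ :=
  ENNReal.rpow_ne_top_of_nonneg hs hdt

private lemma ediv_helper {a b d : ℝ≥0∞} (hd0 : d ≠ 0) (hdt : d ≠ ∞) :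
    (d / b) * (a / d) = a / b := by
  rw [div_eq_mul_inv, div_eq_mul_inv, div_eq_mul_inv]
  calc d * b⁻¹ * (a * d⁻¹) = (d * d⁻¹) * (a * b⁻¹) := by ring
  _ = a * b⁻¹ := by rw [ENNReal.mul_inv_cancel hd0 hdt, one_mul]

private lemma avgNorm_eq_div (hr : 1 ≤ r) (g : X → ℝ) (B : Set X) :
    avgNorm μ r g B =
      (∫⁻ x in B, ENNReal.ofReal |g x| ^ r ∂μ) ^ (1 / r) / (μ B) ^ (1 / r) := by
  rw [avgNorm, ENNReal.div_rpow_of_nonneg _ _ (by positivity)]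

private lemma avgNorm_le_of_subset (hr : 1 ≤ r) {g : X → ℝ} {B D : Set X}
    (hsub : B ⊆ D) (hD0 : μ D ≠ 0) (hDt : μ D ≠ ∞) :
    avgNorm μ r g B ≤ (μ D / μ B) ^ (1 / r) * avgNorm μ r g D := by
  rw [avgNorm_eq_div hr, avgNorm_eq_div hr, ENNReal.div_rpow_of_nonneg _ _ (by positivity)]
  rw [ediv_helper (rpow_div_ne_zero hD0 hDt _) (rpow_div_ne_top hDt (by positivity))]
  exact ENNReal.div_le_div_right
    (ENNReal.rpow_le_rpow (lintegral_mono_set hsub) (by positivity)) _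

private lemma avgNorm_sub_const (hr : 1 ≤ r) {f : X → ℝ} (hf : AEMeasurable f μ)
    {B : Set X} (hB0 : μ B ≠ 0) (hBt : μ B ≠ ∞) (c c' : ℝ) :
    avgNorm μ r (fun x => f x - c') B ≤
      avgNorm μ r (fun x => f x - c) B + ENNReal.ofReal |c - c'| := by
  have hr0 : (0:ℝ) < r := one_pos.trans_le hr
  set F : X → ℝ≥0∞ := fun x => (‖f x - c‖₊ : ℝ≥0∞) with hF
  set G : X → ℝ≥0∞ := fun _ => (‖c - c'‖₊ : ℝ≥0∞) with hG
  have hFmeas : AEMeasurable F (μ.restrict B) :=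
    ((hf.restrict (s := B)).sub aemeasurable_const).enorm
  have hGmeas : AEMeasurable G (μ.restrict B) := aemeasurable_const
  have step1 : (∫⁻ x in B, ENNReal.ofReal |f x - c'| ^ r ∂μ) ^ (1 / r)
      ≤ (∫⁻ x in B, (F x + G x) ^ r ∂μ) ^ (1 / r) := by
    refine ENNReal.rpow_le_rpow (lintegral_mono fun x => ?_) (by positivity)
    refine ENNReal.rpow_le_rpow ?_ hr0.le
    rw [← Real.enorm_eq_ofReal_abs]
    have hx : f x - c' = (f x - c) + (c - c') := by ring
    rw [hx]
    calc (‖(f x - c) + (c - c')‖₊ : ℝ≥0∞)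
        ≤ ((‖f x - c‖₊ + ‖c - c'‖₊ : ℝ≥0) : ℝ≥0∞) := ENNReal.coe_le_coe.2 (nnnorm_add_le _ _)
      _ = F x + G x := ENNReal.coe_add _ _
  have step2 : (∫⁻ x in B, (F x + G x) ^ r ∂μ) ^ (1 / r)
      ≤ (∫⁻ x in B, F x ^ r ∂μ) ^ (1 / r) + (∫⁻ x in B, G x ^ r ∂μ) ^ (1 / r) :=
    ENNReal.lintegral_Lp_add_le hFmeas hGmeas hr
  have step3 : (∫⁻ x in B, G x ^ r ∂μ) ^ (1 / r)
      = (‖c - c'‖₊ : ℝ≥0∞) * (μ B) ^ (1 / r) := by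
    rw [hG, lintegral_const, Measure.restrict_apply_univ,
      ENNReal.mul_rpow_of_nonneg _ _ (by positivity),
      ← ENNReal.rpow_mul, mul_one_div_cancel hr0.ne', ENNReal.rpow_one]
  have hb0 : (μ B) ^ (1 / r) ≠ 0 := rpow_div_ne_zero hB0 hBt _
  have hbt : (μ B) ^ (1 / r) ≠ ∞ := rpow_div_ne_top hBt (by positivity)
  rw [avgNorm_eq_div hr, avgNorm_eq_div hr]
  calc (∫⁻ x in B, ENNReal.ofReal |f x - c'| ^ r ∂μ) ^ (1 / r) / μ B ^ (1 / r)
      ≤ ((∫⁻ x in B, F x ^ r ∂μ) ^ (1 / r) + (‖c - c'‖₊ : ℝ≥0∞) * μ B ^ (1 / r)) /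
          μ B ^ (1 / r) := by
        gcongr
        exact (step1.trans step2).trans (by rw [step3])
    _ = (∫⁻ x in B, F x ^ r ∂μ) ^ (1 / r) / μ B ^ (1 / r) + ENNReal.ofReal |c - c'| := by
        rw [ENNReal.add_div, mul_div_assoc, ENNReal.div_self hb0 hbt, mul_one,
          ← enorm_eq_nnnorm, Real.enorm_eq_ofReal_abs]
    _ = _ := by
        simp only [hF, ← enorm_eq_nnnorm, Real.enorm_eq_ofReal_abs]

private lemma mean_sub_const {f : X → ℝ} {B : Set X} (hf : MeasureTheory.IntegrableOn f B μ)
    (hB0 : μ B ≠ 0) (hBt : μ B ≠ ∞) (c : ℝ) :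
    mean μ (fun x => f x - c) B = mean μ f B - c := by
  have htR : (0:ℝ) < (μ B).toReal := ENNReal.toReal_pos hB0 hBt
  have hc : MeasureTheory.IntegrableOn (fun _ => c) B μ :=
    MeasureTheory.integrableOn_const hBt
  rw [mean, mean, MeasureTheory.integral_sub hf hc, MeasureTheory.setIntegral_const,
    smul_eq_mul, sub_div, mul_comm, mul_div_assoc, measureReal_def, div_self htR.ne', mul_one]

private lemma ofReal_mean_le (hr : 1 ≤ r) {g : X → ℝ} {B : Set X}
    (hg : MeasureTheory.IntegrableOn g B μ) (hB0 : μ B ≠ 0) (hBt : μ B ≠ ∞) :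
    ENNReal.ofReal |mean μ g B| ≤ avgNorm μ r g B := by
  have hr0 : (0:ℝ) < r := one_pos.trans_le hr
  have htR : (0:ℝ) < (μ B).toReal := ENNReal.toReal_pos hB0 hBt
  have h1 : |mean μ g B| ≤ (∫ x in B, |g x| ∂μ) / (μ B).toReal := by
    rw [mean, abs_div, abs_of_pos htR]
    gcongr
    simpa [Real.norm_eq_abs] using
      MeasureTheory.norm_integral_le_integral_norm (μ := μ.restrict B) g
  have h2 : ENNReal.ofReal (∫ x in B, |g x| ∂μ) = ∫⁻ x in B, ENNReal.ofReal |g x| ∂μ :=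
    MeasureTheory.ofReal_integral_eq_lintegral_ofReal hg.abs
      (Filter.Eventually.of_forall fun x => abs_nonneg _)
  have h3 : (∫⁻ x in B, ENNReal.ofReal |g x| ∂μ)
      ≤ (∫⁻ x in B, ENNReal.ofReal |g x| ^ r ∂μ) ^ (1 / r) * (μ B) ^ (1 - 1 / r) := by
    have hpq : (1 : ℝ≥0∞) ≤ ENNReal.ofReal r := by
      rw [← ENNReal.ofReal_one]; exact ENNReal.ofReal_le_ofReal hr
    have := MeasureTheory.eLpNorm_le_eLpNorm_mul_rpow_measure_univ (μ := μ.restrict B)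
      (f := g) hpq hg.aestronglyMeasurable
    rw [MeasureTheory.eLpNorm_one_eq_lintegral_enorm,
      MeasureTheory.eLpNorm_eq_lintegral_rpow_enorm_toReal (by simp [hr0]) ENNReal.ofReal_ne_top,
      ENNReal.toReal_ofReal hr0.le, Measure.restrict_apply_univ] at this
    simpa [Real.enorm_eq_ofReal_abs, ENNReal.toReal_one] using this
  calc ENNReal.ofReal |mean μ g B|
      ≤ ENNReal.ofReal ((∫ x in B, |g x| ∂μ) / (μ B).toReal) := ENNReal.ofReal_le_ofReal h1
    _ = (∫⁻ x in B, ENNReal.ofReal |g x| ∂μ) / μ B := by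
        rw [ENNReal.ofReal_div_of_pos htR, h2, ENNReal.ofReal_toReal hBt]
    _ ≤ ((∫⁻ x in B, ENNReal.ofReal |g x| ^ r ∂μ) ^ (1 / r) * (μ B) ^ (1 - 1 / r)) / μ B := by
        gcongr
    _ = avgNorm μ r g B := by
        rw [avgNorm_eq_div hr g B, mul_div_assoc, div_eq_mul_inv _ (μ B ^ (1 / r))]
        congr 1
        rw [ENNReal.div_eq_inv_mul, mul_comm, ← ENNReal.rpow_neg_one (μ B),
          ← ENNReal.rpow_add _ _ hB0 hBt, ← ENNReal.rpow_neg]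
        ring_nf

private lemma integrableOn_of_lr (hr : 1 ≤ r) {f : X → ℝ} (hf : AEMeasurable f μ)
    {B : Set X} (hBt : μ B ≠ ∞) (hint : (∫⁻ x in B, ENNReal.ofReal |f x| ^ r ∂μ) < ∞) :
    MeasureTheory.IntegrableOn f B μ := by
  refine ⟨(hf.restrict (s := B)).aestronglyMeasurable, ?_⟩
  show (∫⁻ x in B, (‖f x‖₊ : ℝ≥0∞) ∂μ) < ∞
  have hpt : ∀ x, (‖f x‖₊ : ℝ≥0∞) ≤ 1 + ENNReal.ofReal |f x| ^ r := by
    intro x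
    rw [← Real.enorm_eq_ofReal_abs]
    by_cases h : (‖f x‖₊ : ℝ≥0∞) ≤ 1
    · exact h.trans le_self_add
    · refine le_add_of_nonneg_of_le zero_le ?_
      nth_rw 1 [← ENNReal.rpow_one ((‖f x‖₊ : ℝ≥0∞))]
      exact ENNReal.rpow_le_rpow_of_exponent_le (le_of_not_ge h) hr
  calc (∫⁻ x in B, (‖f x‖₊ : ℝ≥0∞) ∂μ)
      ≤ ∫⁻ x in B, 1 + ENNReal.ofReal |f x| ^ r ∂μ := lintegral_mono hpt
    _ = μ B + ∫⁻ x in B, ENNReal.ofReal |f x| ^ r ∂μ := by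
        rw [lintegral_add_left measurable_const, lintegral_const, Measure.restrict_apply_univ,
          one_mul]
    _ < ∞ := ENNReal.add_lt_top.2 ⟨hBt.lt_top, hint⟩

private lemma mean_diff_le (hr : 1 ≤ r) {f : X → ℝ}
    {A D : Set X} (hsub : A ⊆ D) (hA0 : μ A ≠ 0) (hAt : μ A ≠ ∞) (hD0 : μ D ≠ 0)
    (hDt : μ D ≠ ∞) (hfA : MeasureTheory.IntegrableOn f A μ) :
    ENNReal.ofReal |mean μ f D - mean μ f A| ≤ (μ D / μ A) ^ (1 / r) * sharpNorm μ r f D := by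
  have hmean : mean μ f D - mean μ f A = -(mean μ (fun x => f x - mean μ f D) A) := by
    rw [mean_sub_const hfA hA0 hAt]; ring
  have hgi : MeasureTheory.IntegrableOn (fun x => f x - mean μ f D) A μ :=
    hfA.sub (MeasureTheory.integrableOn_const hAt)
  rw [hmean, abs_neg]
  calc ENNReal.ofReal |mean μ (fun x => f x - mean μ f D) A|
      ≤ avgNorm μ r (fun x => f x - mean μ f D) A := ofReal_mean_le hr hgi hA0 hAt
    _ ≤ (μ D / μ A) ^ (1 / r) * avgNorm μ r (fun x => f x - mean μ f D) D :=
        avgNorm_le_of_subset hr hsub hD0 hDt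
    _ = (μ D / μ A) ^ (1 / r) * sharpNorm μ r f D := rfl

private lemma sharpNorm_le_sharpStar {𝔅 : Set (Set X)} {f : X → ℝ} {A D : Set X}
    (hD : D ∈ 𝔅) (hsub : A ⊆ D) : sharpNorm μ r f D ≤ sharpStar μ 𝔅 r f A :=
  le_iSup₂ (f := fun D (_ : D ∈ 𝔅 ∧ A ⊆ D) => sharpNorm μ r f D) D ⟨hD, hsub⟩

private lemma sharpStar_mono {𝔅 : Set (Set X)} {f : X → ℝ} {A A' : Set X} (h : A ⊆ A') :
    sharpStar μ 𝔅 r f A' ≤ sharpStar μ 𝔅 r f A :=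
  iSup₂_le fun _ hD => sharpNorm_le_sharpStar hD.1 (h.trans hD.2)

private lemma rpow_ofReal_le (hr : 1 ≤ r) {x M : ℝ} (hxM : x ≤ M) (hM : 1 ≤ M) :
    ENNReal.ofReal x ^ (1 / r) ≤ ENNReal.ofReal M := by
  have hr0 : (0:ℝ) < r := one_pos.trans_le hr
  calc ENNReal.ofReal x ^ (1 / r) ≤ ENNReal.ofReal M ^ (1 / r) :=
        ENNReal.rpow_le_rpow (ENNReal.ofReal_le_ofReal hxM) (by positivity)
    _ ≤ ENNReal.ofReal M ^ (1:ℝ) := by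
        refine ENNReal.rpow_le_rpow_of_exponent_le ?_ ?_
        · rw [← ENNReal.ofReal_one]; exact ENNReal.ofReal_le_ofReal hM
        · rw [div_le_one hr0]; exact hr
    _ = ENNReal.ofReal M := ENNReal.rpow_one _

end OscHelpers
private noncomputable def oscCC (K η : ℝ) : ℝ≥0∞ := 3 * ENNReal.ofReal (K * η + K + η + 2)

section OscMain

variable {X : Type} [MeasurableSpace X] {μ : Measure X} {𝔅 : Set (Set X)}
  {hull : Set X → Set X} {K η r : ℝ}

private lemma osc_base (hK : 0 < K) (hη : 2 < η) (hr : 1 ≤ r)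
    (hbasis : IsBallBasis μ 𝔅 hull K) {f : X → ℝ} (hf : MemLrLoc μ 𝔅 r f)
    {A B : Set X} (hA : A ∈ 𝔅) (hB : B ∈ 𝔅) (hBsub : B ⊆ hull A)
    (hAηB : μ A ≤ ENNReal.ofReal η * μ B) :
    avgNorm μ r (fun x => f x - mean μ f A) B ≤ oscCC K η * sharpStar μ 𝔅 r f A := by
  have hKη : 0 < K * η := mul_pos hK (lt_trans two_pos hη)
  have hM1 : (1:ℝ) ≤ K * η + K + η + 2 := by nlinarith
  have hA0 := (hbasis.measure_pos A hA).ne'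
  have hAt := (hbasis.measure_lt_top A hA).ne
  have hB0 := (hbasis.measure_pos B hB).ne'
  have hBt := (hbasis.measure_lt_top B hB).ne
  have hA' : hull A ∈ 𝔅 := hbasis.hull_mem A hA
  have hA'0 := (hbasis.measure_pos _ hA').ne'
  have hA't := (hbasis.measure_lt_top _ hA').ne
  have hAsub : A ⊆ hull A := hbasis.subset_hull A hA A hA
    (le_mul_of_one_le_left zero_le one_le_two)
    (by rw [Set.inter_self]; exact MeasureTheory.nonempty_of_measure_ne_zero hA0)
  have hfA : IntegrableOn f A μ := integrableOn_of_lr hr hf.1 hAt (hf.2 A hA)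
  have hhullK : μ (hull A) ≤ ENNReal.ofReal K * μ A := hbasis.hull_measure A hA
  have hratio1 : μ (hull A) / μ B ≤ ENNReal.ofReal (K * η) := by
    refine ENNReal.div_le_of_le_mul ?_
    calc μ (hull A) ≤ ENNReal.ofReal K * μ A := hhullK
      _ ≤ ENNReal.ofReal K * (ENNReal.ofReal η * μ B) := by gcongr
      _ = ENNReal.ofReal (K * η) * μ B := by
          rw [← mul_assoc, ← ENNReal.ofReal_mul hK.le]
  have hratio2 : μ (hull A) / μ A ≤ ENNReal.ofReal K := ENNReal.div_le_of_le_mul hhullK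
  have hsharp : sharpNorm μ r f (hull A) ≤ sharpStar μ 𝔅 r f A := sharpNorm_le_sharpStar hA' hAsub
  have hrpow1 : (μ (hull A) / μ B) ^ (1 / r) ≤ ENNReal.ofReal (K * η + K + η + 2) :=
    (ENNReal.rpow_le_rpow hratio1 (by positivity)).trans (rpow_ofReal_le hr (by nlinarith) hM1)
  have hrpow2 : (μ (hull A) / μ A) ^ (1 / r) ≤ ENNReal.ofReal (K * η + K + η + 2) :=
    (ENNReal.rpow_le_rpow hratio2 (by positivity)).trans (rpow_ofReal_le hr (by nlinarith) hM1)
  calc avgNorm μ r (fun x => f x - mean μ f A) B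
      ≤ avgNorm μ r (fun x => f x - mean μ f (hull A)) B
          + ENNReal.ofReal |mean μ f (hull A) - mean μ f A| :=
        avgNorm_sub_const hr hf.1 hB0 hBt _ _
    _ ≤ (μ (hull A) / μ B) ^ (1 / r) * sharpNorm μ r f (hull A)
          + (μ (hull A) / μ A) ^ (1 / r) * sharpNorm μ r f (hull A) := by
        refine add_le_add ?_ ?_
        · exact avgNorm_le_of_subset hr hBsub hA'0 hA't
        · exact mean_diff_le hr hAsub hA0 hAt hA'0 hA't hfA
    _ ≤ ENNReal.ofReal (K * η + K + η + 2) * sharpStar μ 𝔅 r f A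
          + ENNReal.ofReal (K * η + K + η + 2) * sharpStar μ 𝔅 r f A :=
        add_le_add (mul_le_mul' hrpow1 hsharp) (mul_le_mul' hrpow2 hsharp)
    _ ≤ oscCC K η * sharpStar μ 𝔅 r f A := by
        rw [← two_mul, ← mul_assoc, oscCC]
        exact mul_le_mul_left (mul_le_mul_left (by norm_num) _) _

private lemma osc_key (hK : 0 < K) (hη : 2 < η) (hr : 1 ≤ r)
    (hbasis : IsBallBasis μ 𝔅 hull K) (hdbl : IsDoublingBasis μ 𝔅 hull η)
    {f : X → ℝ} (hf : MemLrLoc μ 𝔅 r f) {B : Set X} (hB : B ∈ 𝔅) (n : ℕ) :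
    ∀ A ∈ 𝔅, (A ∩ B).Nonempty → μ A ≤ μ B → μ B ≤ 2 ^ (n + 1) * μ A →
      avgNorm μ r (fun x => f x - mean μ f A) B ≤
        ((n : ℝ≥0∞) + 1) * oscCC K η * sharpStar μ 𝔅 r f A := by
  have hKη : 0 < K * η := mul_pos hK (lt_trans two_pos hη)
  have hM1 : (1:ℝ) ≤ K * η + K + η + 2 := by nlinarith
  have h1η : (1:ℝ≥0∞) ≤ ENNReal.ofReal η := by
    rw [← ENNReal.ofReal_one]; exact ENNReal.ofReal_le_ofReal (by linarith)
  induction n with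
  | zero =>
    intro A hA hne hμ h2
    have hBsub : B ⊆ hull A := hbasis.subset_hull A hA B hB (by simpa using h2)
      (by rwa [Set.inter_comm] at hne)
    have hbase := osc_base hK hη hr hbasis hf hA hB hBsub
      (hμ.trans (le_mul_of_one_le_left zero_le h1η))
    simpa using hbase
  | succ n ih =>
    intro A hA hne hμ h2
    push_cast
    have hA0 := (hbasis.measure_pos A hA).ne'
    have hAt := (hbasis.measure_lt_top A hA).ne
    have hB0 := (hbasis.measure_pos B hB).ne'
    have hBt := (hbasis.measure_lt_top B hB).ne
    have hfA : IntegrableOn f A μ := integrableOn_of_lr hr hf.1 hAt (hf.2 A hA)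
    have hone : (1:ℝ≥0∞) ≤ (n : ℝ≥0∞) + 1 + 1 := by
      refine le_add_of_nonneg_of_le zero_le le_rfl
    by_cases hBsub : B ⊆ hull A
    · have hbase := osc_base hK hη hr hbasis hf hA hB hBsub
        (hμ.trans (le_mul_of_one_le_left zero_le h1η))
      refine hbase.trans ?_
      rw [mul_assoc]
      exact le_mul_of_one_le_left zero_le hone
    · have h2A : ¬ (μ B ≤ 2 * μ A) := fun h =>
        hBsub (hbasis.subset_hull A hA B hB h (by rwa [Set.inter_comm] at hne))
      have hneU : hull A ≠ Set.univ := fun h => hBsub (h ▸ Set.subset_univ B)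
      obtain ⟨A', hA', hsubA', hlow, hup⟩ := hdbl A hA hneU
      have hA'0 := (hbasis.measure_pos A' hA').ne'
      have hA't := (hbasis.measure_lt_top A' hA').ne
      have hneA' : (A' ∩ B).Nonempty :=
        Set.Nonempty.mono (Set.inter_subset_inter hsubA' Set.Subset.rfl) hne
      have hstep : ENNReal.ofReal |mean μ f A' - mean μ f A| ≤
          oscCC K η * sharpStar μ 𝔅 r f A := by
        refine (mean_diff_le hr hsubA' hA0 hAt hA'0 hA't hfA).trans ?_
        have hratio : (μ A' / μ A) ^ (1 / r) ≤ ENNReal.ofReal (K * η + K + η + 2) :=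
          (ENNReal.rpow_le_rpow (ENNReal.div_le_of_le_mul hup) (by positivity)).trans
            (rpow_ofReal_le hr (by nlinarith) hM1)
        calc (μ A' / μ A) ^ (1 / r) * sharpNorm μ r f A'
            ≤ ENNReal.ofReal (K * η + K + η + 2) * sharpStar μ 𝔅 r f A :=
              mul_le_mul' hratio (sharpNorm_le_sharpStar hA' hsubA')
          _ ≤ oscCC K η * sharpStar μ 𝔅 r f A := by
              rw [oscCC]
              exact mul_le_mul_left (le_mul_of_one_le_left zero_le (by norm_num)) _
      have hmink : avgNorm μ r (fun x => f x - mean μ f A) B ≤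
          avgNorm μ r (fun x => f x - mean μ f A') B
            + ENNReal.ofReal |mean μ f A' - mean μ f A| :=
        avgNorm_sub_const hr hf.1 hB0 hBt _ _
      by_cases hsmall : μ B ≤ 2 * μ A'
      · have hBsub' : B ⊆ hull A' := hbasis.subset_hull A' hA' B hB hsmall
          (by rwa [Set.inter_comm] at hneA')
        have hbase' := osc_base hK hη hr hbasis hf hA' hB hBsub'
          (hup.trans (by gcongr))
        have h2n : (2:ℝ≥0∞) ≤ (n : ℝ≥0∞) + 1 + 1 := by
          rw [← one_add_one_eq_two]
          exact add_le_add (le_add_self) le_rfl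
        calc avgNorm μ r (fun x => f x - mean μ f A) B
            ≤ avgNorm μ r (fun x => f x - mean μ f A') B
                + ENNReal.ofReal |mean μ f A' - mean μ f A| := hmink
          _ ≤ oscCC K η * sharpStar μ 𝔅 r f A' + oscCC K η * sharpStar μ 𝔅 r f A :=
              add_le_add hbase' hstep
          _ ≤ oscCC K η * sharpStar μ 𝔅 r f A + oscCC K η * sharpStar μ 𝔅 r f A := by
              gcongr
              exact sharpStar_mono hsubA'
          _ = 2 * (oscCC K η * sharpStar μ 𝔅 r f A) := (two_mul _).symm
          _ ≤ ((n : ℝ≥0∞) + 1 + 1) * oscCC K η * sharpStar μ 𝔅 r f A := by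
              rw [mul_assoc ((n : ℝ≥0∞) + 1 + 1)]
              exact mul_le_mul_left h2n _
      · have h2A' : 2 * μ A' < μ B := not_le.1 hsmall
        have hμ' : μ A' ≤ μ B :=
          le_trans (le_mul_of_one_le_left zero_le one_le_two) h2A'.le
        have hpow : μ B ≤ 2 ^ (n + 1) * μ A' := by
          calc μ B ≤ 2 ^ (n + 1 + 1) * μ A := h2
            _ = 2 ^ (n + 1) * (2 * μ A) := by rw [pow_succ, mul_assoc]
            _ ≤ 2 ^ (n + 1) * μ A' := by gcongr
        have hrec := ih A' hA' hneA' hμ' hpow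
        calc avgNorm μ r (fun x => f x - mean μ f A) B
            ≤ avgNorm μ r (fun x => f x - mean μ f A') B
                + ENNReal.ofReal |mean μ f A' - mean μ f A| := hmink
          _ ≤ ((n : ℝ≥0∞) + 1) * oscCC K η * sharpStar μ 𝔅 r f A'
                + oscCC K η * sharpStar μ 𝔅 r f A := add_le_add hrec hstep
          _ ≤ ((n : ℝ≥0∞) + 1) * oscCC K η * sharpStar μ 𝔅 r f A
                + oscCC K η * sharpStar μ 𝔅 r f A := by
              gcongr
              exact sharpStar_mono hsubA'
          _ = ((n : ℝ≥0∞) + 1 + 1) * oscCC K η * sharpStar μ 𝔅 r f A := by ring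

end OscMain
theorem osc_log_bound (K η r : ℝ) (hK : 0 < K) (hη : 2 < η) (hr : 1 ≤ r) :
    ∃ c : ℝ≥0∞, 0 < c ∧ c ≠ ∞ ∧
      ∀ (X : Type) (_ : MeasurableSpace X) (μ : Measure X)
        (𝔅 : Set (Set X)) (hull : Set X → Set X),
        IsBallBasis μ 𝔅 hull K →
        IsDoublingBasis μ 𝔅 hull η →
        ∀ f : X → ℝ, MemLrLoc μ 𝔅 r f →
          ∀ A ∈ 𝔅, ∀ B ∈ 𝔅, (A ∩ B).Nonempty → μ A ≤ μ B →
            avgNorm μ r (fun x => f x - mean μ f A) B ≤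
              c * ENNReal.ofReal (1 + Real.logb 2 ((μ B).toReal / (μ A).toReal)) *
                sharpStar μ 𝔅 r f A := by
  have hKη : 0 < K * η := mul_pos hK (lt_trans two_pos hη)
  have hMpos : (0:ℝ) < K * η + K + η + 2 := by nlinarith
  have hCC0 : oscCC K η ≠ 0 :=
    (ENNReal.mul_pos (by norm_num) (ENNReal.ofReal_pos.2 hMpos).ne').ne'
  have hCCt : oscCC K η ≠ ∞ := ENNReal.mul_ne_top (by norm_num) ENNReal.ofReal_ne_top
  refine ⟨2 * oscCC K η, ENNReal.mul_pos (by norm_num) hCC0, ENNReal.mul_ne_top (by norm_num) hCCt, ?_⟩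
  intro X mX μ 𝔅 hull hbasis hdbl f hf A hA B hB hne hμ
  have hA0 := (hbasis.measure_pos A hA).ne'
  have hAt := (hbasis.measure_lt_top A hA).ne
  have hB0 := (hbasis.measure_pos B hB).ne'
  have hBt := (hbasis.measure_lt_top B hB).ne
  have htA : (0:ℝ) < (μ A).toReal := ENNReal.toReal_pos hA0 hAt
  have htB : (0:ℝ) < (μ B).toReal := ENNReal.toReal_pos hB0 hBt
  have ht1 : (1:ℝ) ≤ (μ B).toReal / (μ A).toReal :=
    (one_le_div htA).2 ((ENNReal.toReal_le_toReal hAt hBt).2 hμ)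
  set L := Real.logb 2 ((μ B).toReal / (μ A).toReal) with hL
  have hL0 : 0 ≤ L := Real.logb_nonneg one_lt_two ht1
  set n := ⌈L⌉₊ with hn
  have hpow : μ B ≤ 2 ^ (n + 1) * μ A := by
    have h1 : (μ B).toReal / (μ A).toReal ≤ 2 ^ (n + 1) := by
      calc (μ B).toReal / (μ A).toReal
          = 2 ^ L := (Real.rpow_logb two_pos (by norm_num) (by linarith)).symm
        _ ≤ 2 ^ ((n:ℝ) + 1) :=
            Real.rpow_le_rpow_of_exponent_le one_le_two
              ((Nat.le_ceil L).trans (le_add_of_nonneg_right zero_le_one))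
        _ = 2 ^ (n + 1) := by
            rw [← Real.rpow_natCast 2 (n + 1)]
            norm_num
    have h2 : (μ B).toReal ≤ 2 ^ (n + 1) * (μ A).toReal := by
      rw [div_le_iff₀ htA] at h1
      linarith
    calc μ B = ENNReal.ofReal (μ B).toReal := (ENNReal.ofReal_toReal hBt).symm
      _ ≤ ENNReal.ofReal (2 ^ (n + 1) * (μ A).toReal) := ENNReal.ofReal_le_ofReal h2
      _ = 2 ^ (n + 1) * μ A := by
          rw [ENNReal.ofReal_mul (by positivity), ENNReal.ofReal_toReal hAt,
            ENNReal.ofReal_pow (by norm_num), ENNReal.ofReal_ofNat]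
  have hkey := osc_key hK hη hr hbasis hdbl hf hB n A hA hne hμ hpow
  refine hkey.trans ?_
  have hcast : ((n : ℝ≥0∞) + 1) ≤ ENNReal.ofReal (2 * (1 + L)) := by
    have h1 : ((n : ℝ≥0∞) + 1) = ENNReal.ofReal ((n : ℝ) + 1) := by
      rw [ENNReal.ofReal_add (by positivity) zero_le_one, ENNReal.ofReal_natCast,
        ENNReal.ofReal_one]
    rw [h1]
    refine ENNReal.ofReal_le_ofReal ?_
    have h2 : (n : ℝ) < L + 1 := Nat.ceil_lt_add_one hL0
    linarith
  refine mul_le_mul_left ?_ _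
  calc ((n : ℝ≥0∞) + 1) * oscCC K η ≤ ENNReal.ofReal (2 * (1 + L)) * oscCC K η :=
        mul_le_mul_left hcast _
    _ = 2 * oscCC K η * ENNReal.ofReal (1 + L) := by
        rw [ENNReal.ofReal_mul (by norm_num), ENNReal.ofReal_ofNat]
        ring
end

section
/- Let (X, 𝓜, μ) be a measure space equipped with a ball-basis 𝔅, let f : X → ℝ be measurable and a.e. finite, let B ∈ 𝔅 and 0 < α < 1. Then there exists a measurable set E ⊆ B such that μ(E) ≥ α μ(B) and OSC_E(f) ≤ OSC_{B,α}(f). -/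
open MeasureTheory Set
open scoped ENNReal NNReal symmDiff

variable {X : Type*}

lemma exists_ae_mem_Icc {X : Type*} [MeasurableSpace X] (μ : Measure X) (f : X → ℝ)
    {E : Set X} (hE : MeasurableSet E) (hpos : 0 < μ E) (hfin : μ E ≠ ∞)
    {c : ℝ} (hc : 0 ≤ c) (hosc : oscE μ f E ≤ ENNReal.ofReal c) :
    ∃ a : ℝ, ∀ᵐ x ∂(μ.restrict E), f x ∈ Set.Icc a (a + c) := by
  set ν := μ.restrict E with hν
  haveI : IsFiniteMeasure ν := ⟨by rw [hν, Measure.restrict_apply_univ]; exact hfin.lt_top⟩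
  have hν0 : ν ≠ 0 := by
    intro h
    rw [hν] at h
    have := Measure.restrict_apply_univ (μ := μ) (s := E)
    rw [h] at this
    simp at this
    exact hpos.ne' this.symm
  haveI : (ae ν).NeBot := ae_neBot.2 hν0
  have hae : ∀ᵐ p ∂(ν.prod ν), ENNReal.ofReal |f p.1 - f p.2| ≤ ENNReal.ofReal c :=
    (ENNReal.ae_le_essSup _).mono fun p hp => hp.trans hosc
  have hae2 : ∀ᵐ x ∂ν, ∀ᵐ y ∂ν, |f x - f y| ≤ c := by
    have := Measure.ae_ae_of_ae_prod hae
    filter_upwards [this] with x hx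
    filter_upwards [hx] with y hy
    exact (ENNReal.ofReal_le_ofReal_iff hc).1 hy
  obtain ⟨x₀, hx₀⟩ := hae2.exists
  set s : Set ℝ := {t | 0 < ν {x | f x ≤ t}} with hs
  have hs_ne : (f x₀ + c) ∈ s := by
    have h1 : ν {y | ¬ f y ≤ f x₀ + c} = 0 := by
      refine measure_mono_null ?_ (ae_iff.1 hx₀)
      intro y hy
      simp only [mem_setOf_eq, not_le] at hy ⊢
      have h3 : f y - f x₀ ≤ |f x₀ - f y| := by rw [abs_sub_comm]; exact le_abs_self _
      linarith
    have h2 : ν Set.univ ≤ ν {y | f y ≤ f x₀ + c} + ν {y | ¬ f y ≤ f x₀ + c} := by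
      refine le_trans (measure_mono ?_) (measure_union_le _ _)
      intro y _
      by_cases h : f y ≤ f x₀ + c
      · exact Or.inl h
      · exact Or.inr h
    rw [h1, add_zero] at h2
    have hpos' : 0 < ν Set.univ := by
      rw [hν, Measure.restrict_apply_univ]; exact hpos
    exact lt_of_lt_of_le hpos' h2
  have hs_bdd : BddBelow s := by
    refine ⟨f x₀ - c, fun t ht => ?_⟩
    by_contra h
    push_neg at h
    have hnull : ν {x | f x ≤ t} = 0 := by
      refine measure_mono_null ?_ (ae_iff.1 hx₀)
      intro y hy
      simp only [mem_setOf_eq, not_le] at hy ⊢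
      have h3 : f x₀ - f y ≤ |f x₀ - f y| := le_abs_self _
      linarith
    rw [hs] at ht
    simp only [mem_setOf_eq, hnull] at ht
    exact lt_irrefl _ ht
  set a := sInf s with ha
  have hclaimA : ∀ᵐ y ∂ν, a ≤ f y := by
    rw [ae_iff]
    refine measure_mono_null (fun y hy => ?_)
      (measure_iUnion_null (s := fun q : ℚ => {y | f y ≤ q ∧ (q : ℝ) < a}) fun q => ?_)
    · simp only [mem_setOf_eq, not_le] at hy
      obtain ⟨q, hq1, hq2⟩ := exists_rat_btwn hy
      exact mem_iUnion.2 ⟨q, hq1.le, hq2⟩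
    · by_cases hq : (q : ℝ) < a
      · have hqs : (q : ℝ) ∉ s := fun hmem => absurd (csInf_le hs_bdd hmem) (not_le.2 hq)
        have : ν {y | f y ≤ (q : ℝ)} = 0 := by
          by_contra h
          exact hqs (pos_iff_ne_zero.2 h)
        show ν {y | f y ≤ (q:ℝ) ∧ (q : ℝ) < a} = 0
        exact measure_mono_null (fun y hy => hy.1) this
      · show ν {y | f y ≤ (q:ℝ) ∧ (q : ℝ) < a} = 0
        have h4 : {y | f y ≤ (q:ℝ) ∧ (q : ℝ) < a} = ∅ := by
          ext y; simp only [mem_setOf_eq, mem_empty_iff_false, iff_false, not_and]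
          exact fun _ => hq
        rw [h4, measure_empty]
  have hclaimB : ∀ᵐ y ∂ν, f y ≤ a + c := by
    have key : ∀ n : ℕ, ∀ᵐ y ∂ν, f y ≤ a + c + 1 / (n + 1) := by
      intro n
      have hε : (0:ℝ) < 1 / ((n:ℝ) + 1) := by positivity
      obtain ⟨t, hts, htlt⟩ := exists_lt_of_csInf_lt ⟨_, hs_ne⟩ (lt_add_of_pos_right a hε)
      have hfull : ν {x | ¬ ∀ᵐ y ∂ν, |f x - f y| ≤ c} = 0 := ae_iff.1 hae2
      have hne : ν ({x | f x ≤ t} \ {x | ¬ ∀ᵐ y ∂ν, |f x - f y| ≤ c}) = ν {x | f x ≤ t} :=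
        measure_diff_null hfull
      have hpos2 : ν ({x | f x ≤ t} \ {x | ¬ ∀ᵐ y ∂ν, |f x - f y| ≤ c}) ≠ 0 := by
        rw [hne]; exact hts.ne'
      obtain ⟨x₁, hx₁⟩ := nonempty_of_measure_ne_zero hpos2
      have hx₁f : f x₁ ≤ t := hx₁.1
      have hx₁ae : ∀ᵐ y ∂ν, |f x₁ - f y| ≤ c := not_not.1 hx₁.2
      filter_upwards [hx₁ae] with y hy
      have := abs_le.1 hy
      linarith [this.1]
    filter_upwards [ae_all_iff.2 key] with y hy
    by_contra h
    push_neg at h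
    obtain ⟨n, hn⟩ := exists_nat_one_div_lt (sub_pos.2 h)
    have := hy n
    push_cast at hn this
    linarith
  exact ⟨a, by filter_upwards [hclaimA, hclaimB] with y h1 h2 using ⟨h1, h2⟩⟩

theorem exists_set_osc_le
    {X : Type*} [MeasurableSpace X] (μ : Measure X) (𝔅 : Set (Set X))
    (hull : Set X → Set X) (K : ℝ) (hK : 0 < K)
    (hbasis : IsBallBasis μ 𝔅 hull K)
    (f : X → ℝ) (hf : Measurable f)
    (B : Set X) (hB : B ∈ 𝔅) (α : ℝ) (hα : 0 < α) (hα1 : α < 1) :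
    ∃ E : Set X, MeasurableSet E ∧ E ⊆ B ∧ ENNReal.ofReal α * μ B ≤ μ E ∧
      oscE μ f E ≤ oscAlpha μ f B α := by
  have hBmeas : MeasurableSet B := hbasis.measurableSet B hB
  have hBpos : 0 < μ B := hbasis.measure_pos B hB
  have hBfin : μ B < ∞ := hbasis.measure_lt_top B hB
  have hαB : 0 < ENNReal.ofReal α * μ B :=
    ENNReal.mul_pos (ENNReal.ofReal_pos.2 hα).ne' hBpos.ne'
  have hαBlt : ENNReal.ofReal α * μ B < μ B := by
    conv_rhs => rw [← one_mul (μ B)]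
    rw [mul_comm _ (μ B), mul_comm 1 (μ B)]
    exact ENNReal.mul_lt_mul_right hBpos.ne' hBfin.ne (ENNReal.ofReal_lt_one.2 hα1)
  by_cases hL : oscAlpha μ f B α = ⊤
  · exact ⟨B, hBmeas, subset_rfl, hαBlt.le, hL ▸ le_top⟩
  set L := oscAlpha μ f B α with hLdef
  set L' := L.toReal with hL'def
  have hLL : ENNReal.ofReal L' = L := ENNReal.ofReal_toReal hL
  -- minimizing sequence
  have hex : ∀ n : ℕ, ∃ E : Set X,
      (MeasurableSet E ∧ E ⊆ B ∧ ENNReal.ofReal α * μ B < μ E) ∧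
      oscE μ f E < L + ENNReal.ofReal (1 / (n + 1)) := by
    intro n
    have hlt : oscAlpha μ f B α < L + ENNReal.ofReal (1 / (n + 1)) := by
      rw [← hLdef]
      exact ENNReal.lt_add_right hL (ENNReal.ofReal_pos.2 (by positivity)).ne'
    rw [oscAlpha] at hlt
    obtain ⟨E, hE⟩ := iInf_lt_iff.1 hlt
    obtain ⟨hP, hlt'⟩ := iInf_lt_iff.1 hE
    exact ⟨E, hP, hlt'⟩
  choose E hE1 hE2 using hex
  have hEmeas : ∀ n, MeasurableSet (E n) := fun n => (hE1 n).1
  have hEB : ∀ n, E n ⊆ B := fun n => (hE1 n).2.1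
  have hEμ : ∀ n, ENNReal.ofReal α * μ B < μ (E n) := fun n => (hE1 n).2.2
  set c : ℕ → ℝ := fun n => L' + 1 / (n + 1) with hcdef
  have hc_nonneg : ∀ n, 0 ≤ c n := fun n => by
    have : (0:ℝ) ≤ L' := ENNReal.toReal_nonneg
    have h1 : (0:ℝ) < 1 / ((n:ℝ) + 1) := by positivity
    simp only [hcdef]; linarith
  have hosc_n : ∀ n, oscE μ f (E n) ≤ ENNReal.ofReal (c n) := by
    intro n
    have := (hE2 n).le
    rwa [← hLL, ← ENNReal.ofReal_add ENNReal.toReal_nonneg (by positivity)] at this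
  have hEpos : ∀ n, 0 < μ (E n) := fun n => lt_trans hαB (hEμ n)
  have hEfin : ∀ n, μ (E n) ≠ ∞ := fun n =>
    (lt_of_le_of_lt (measure_mono (hEB n)) hBfin).ne
  choose a ha using fun n =>
    exists_ae_mem_Icc μ f (hEmeas n) (hEpos n) (hEfin n) (hc_nonneg n) (hosc_n n)
  -- boundedness
  have hMex : ∃ M : ℕ, μ (B ∩ {x | (M:ℝ) < |f x|}) < ENNReal.ofReal α * μ B := by
    have h1 : Filter.Tendsto (fun M : ℕ => μ (B ∩ {x | (M:ℝ) < |f x|})) Filter.atTop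
        (nhds (μ (⋂ M : ℕ, B ∩ {x | (M:ℝ) < |f x|}))) := by
      refine tendsto_measure_iInter_atTop
        (fun M => (hBmeas.inter (measurableSet_lt measurable_const hf.abs)).nullMeasurableSet)
        (fun m m' hmm' x hx => ⟨hx.1,
          lt_of_le_of_lt (Nat.cast_le.2 hmm' : (m:ℝ) ≤ (m':ℝ))
            (show ((m':ℝ) < |f x|) from hx.2)⟩)
        ⟨0, (lt_of_le_of_lt (measure_mono inter_subset_left) hBfin).ne⟩
    have h2 : (⋂ M : ℕ, B ∩ {x | (M:ℝ) < |f x|}) = ∅ := by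
      ext x
      simp only [mem_iInter, mem_inter_iff, mem_setOf_eq, mem_empty_iff_false, iff_false, not_forall]
      obtain ⟨M, hM⟩ := exists_nat_gt |f x|
      exact ⟨M, fun h => absurd h.2 (not_lt.2 hM.le)⟩
    rw [h2, measure_empty] at h1
    exact (h1.eventually_lt_const hαB).exists
  obtain ⟨M, hM⟩ := hMex
  have hbound : ∀ n, a n ∈ Icc (-(M:ℝ) - (L' + 1)) M := by
    intro n
    have hpos' : μ.restrict (E n) {x | |f x| ≤ (M:ℝ)} ≠ 0 := by
      intro h0
      rw [Measure.restrict_apply (measurableSet_le hf.abs measurable_const)] at h0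
      have hcover : E n ⊆ ({x | |f x| ≤ (M:ℝ)} ∩ E n) ∪ (B ∩ {x | (M:ℝ) < |f x|}) := by
        intro x hx
        by_cases h : |f x| ≤ (M:ℝ)
        · exact Or.inl ⟨h, hx⟩
        · exact Or.inr ⟨hEB n hx, not_le.1 h⟩
      have h5 : μ (E n) ≤ μ ({x | |f x| ≤ (M:ℝ)} ∩ E n) + μ (B ∩ {x | (M:ℝ) < |f x|}) :=
        (measure_mono hcover).trans (measure_union_le _ _)
      rw [h0, zero_add] at h5
      exact absurd (lt_of_le_of_lt h5 hM) (not_lt.2 (hEμ n).le)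
    have hdiff : μ.restrict (E n) ({x | |f x| ≤ (M:ℝ)} \ {x | f x ∉ Icc (a n) (a n + c n)})
        = μ.restrict (E n) {x | |f x| ≤ (M:ℝ)} := measure_diff_null (ae_iff.1 (ha n))
    obtain ⟨x, hx⟩ := nonempty_of_measure_ne_zero (hdiff.trans_ne hpos')
    have hxM := abs_le.1 (show |f x| ≤ (M:ℝ) from hx.1)
    have hxI : f x ∈ Icc (a n) (a n + c n) := not_not.1 (show ¬ f x ∉ Icc (a n) (a n + c n) from hx.2)
    have h1n : (1:ℝ) / ((n:ℝ) + 1) ≤ 1 := by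
      rw [div_le_one (by positivity)]
      simp [Nat.cast_nonneg]
    constructor
    · have := hxI.2
      simp only [hcdef] at this
      linarith [hxM.1]
    · linarith [hxI.1, hxM.2]
  obtain ⟨aa, _, φ, hφ, hconv⟩ := (isCompact_Icc (a := -(M:ℝ) - (L' + 1)) (b := (M:ℝ))).tendsto_subseq hbound
  refine ⟨B ∩ f ⁻¹' Icc aa (aa + L'), hBmeas.inter (hf measurableSet_Icc), inter_subset_left, ?_, ?_⟩
  · -- measure bound
    set D : ℕ → Set X := fun m => B ∩ f ⁻¹' Icc (aa - 1 / (m + 1)) (aa + L' + 1 / (m + 1)) with hDdef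
    have hDm : ∀ m, ENNReal.ofReal α * μ B ≤ μ (D m) := by
      intro m
      have hε : (0:ℝ) < 1 / (2 * ((m:ℝ) + 1)) := by positivity
      obtain ⟨K, hK⟩ := Metric.tendsto_atTop.1 hconv _ hε
      set k := max K (2 * m + 2) with hkdef
      have hk1 : dist (a (φ k)) aa < 1 / (2 * ((m:ℝ) + 1)) := hK k (le_max_left _ _)
      set n := φ k with hndef
      have hk2 : (1:ℝ) / ((n:ℝ) + 1) ≤ 1 / (2 * ((m:ℝ) + 1)) := by
        have h1 : (2 * m + 2 : ℕ) ≤ n := le_trans (le_max_right _ _) (hφ.le_apply)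
        have h2 : (2 * ((m:ℝ) + 1)) ≤ (n:ℝ) + 1 := by
          have h3 : ((2 * m + 2 : ℕ) : ℝ) ≤ (n : ℝ) := Nat.cast_le.2 h1
          push_cast at h3
          linarith
        exact one_div_le_one_div_of_le (by positivity) h2
      have hdist := abs_le.1 (le_of_lt (by rwa [Real.dist_eq] at hk1))
      have hhalf : 1 / (2 * ((m:ℝ) + 1)) = (1 / ((m:ℝ) + 1)) / 2 := by
        rw [div_div, mul_comm]
      have htpos : (0:ℝ) ≤ 1 / ((m:ℝ) + 1) := by positivity
      have hsub : E n ∩ f ⁻¹' Icc (a n) (a n + c n) ⊆ D m := by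
        intro x hx
        obtain ⟨hx1, hx2⟩ := hx
        simp only [mem_preimage, mem_Icc] at hx2
        have hcv : c n = L' + 1 / ((n:ℝ) + 1) := rfl
        rw [hcv] at hx2
        refine ⟨hEB n hx1, ?_, ?_⟩
        · show aa - 1 / ((m:ℝ)+1) ≤ f x
          linarith [hdist.1, hdist.2, hx2.1, hk2, hε.le, hhalf]
        · show f x ≤ aa + L' + 1 / ((m:ℝ)+1)
          linarith [hdist.1, hdist.2, hx2.2, hk2, hhalf]
      have hEn : μ (E n) ≤ μ (E n ∩ f ⁻¹' Icc (a n) (a n + c n)) := by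
        have hnull : μ ((f ⁻¹' Icc (a n) (a n + c n))ᶜ ∩ E n) = 0 := by
          have := ae_iff.1 (ha n)
          rwa [Measure.restrict_apply (by
            exact (hf measurableSet_Icc).compl)] at this
        calc μ (E n) ≤ μ ((E n ∩ f ⁻¹' Icc (a n) (a n + c n)) ∪ ((f ⁻¹' Icc (a n) (a n + c n))ᶜ ∩ E n)) := by
              refine measure_mono fun x hx => ?_
              by_cases h : f x ∈ Icc (a n) (a n + c n)
              · exact Or.inl ⟨hx, h⟩
              · exact Or.inr ⟨h, hx⟩
          _ ≤ μ (E n ∩ f ⁻¹' Icc (a n) (a n + c n)) + μ ((f ⁻¹' Icc (a n) (a n + c n))ᶜ ∩ E n) :=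
              measure_union_le _ _
          _ = μ (E n ∩ f ⁻¹' Icc (a n) (a n + c n)) := by rw [hnull, add_zero]
      exact le_trans (hEμ n).le (hEn.trans (measure_mono hsub))
    have hDanti : Antitone D := by
      intro m m' hmm' x hx
      have h1 : (1:ℝ) / ((m':ℝ) + 1) ≤ 1 / ((m:ℝ) + 1) := by
        apply one_div_le_one_div_of_le (by positivity)
        have h3 : ((m:ℕ):ℝ) ≤ ((m':ℕ):ℝ) := Nat.cast_le.2 hmm'
        linarith
      obtain ⟨hxB, hxI⟩ := hx
      simp only [mem_preimage, mem_Icc] at hxI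
      exact ⟨hxB, by simp only [mem_preimage, mem_Icc]; constructor <;> linarith⟩
    have hDcap : ⋂ m, D m = B ∩ f ⁻¹' Icc aa (aa + L') := by
      ext x
      simp only [mem_iInter, mem_inter_iff, mem_preimage, mem_Icc, hDdef]
      constructor
      · intro h
        refine ⟨(h 0).1, ?_, ?_⟩
        · by_contra hcon
          push_neg at hcon
          obtain ⟨m, hm⟩ := exists_nat_one_div_lt (sub_pos.2 hcon)
          have := (h m).2.1
          push_cast at hm this ⊢
          linarith
        · by_contra hcon
          push_neg at hcon
          obtain ⟨m, hm⟩ := exists_nat_one_div_lt (sub_pos.2 hcon)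
          have := (h m).2.2
          push_cast at hm this ⊢
          linarith
      · rintro ⟨hxB, h1, h2⟩ m
        have : (0:ℝ) < 1 / ((m:ℝ) + 1) := by positivity
        exact ⟨hxB, by linarith, by linarith⟩
    have htend : Filter.Tendsto (μ ∘ D) Filter.atTop (nhds (μ (⋂ m, D m))) := by
      refine tendsto_measure_iInter_atTop
        (fun m => (hBmeas.inter (hf measurableSet_Icc)).nullMeasurableSet) hDanti
        ⟨0, (lt_of_le_of_lt (measure_mono inter_subset_left) hBfin).ne⟩
    rw [hDcap] at htend
    exact ge_of_tendsto htend (Filter.Eventually.of_forall hDm)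
  · -- oscillation bound
    rw [← hLL]
    set EE := B ∩ f ⁻¹' Icc aa (aa + L') with hEdef
    have hEEmeas : MeasurableSet EE := hBmeas.inter (hf measurableSet_Icc)
    rw [oscE]
    refine essSup_le_of_ae_le _ ?_
    haveI : IsFiniteMeasure (μ.restrict EE) :=
      ⟨by rw [Measure.restrict_apply_univ]
          exact lt_of_le_of_lt (measure_mono inter_subset_left) hBfin⟩
    have hmem : ∀ᵐ p ∂((μ.restrict EE).prod (μ.restrict EE)), p ∈ EE ×ˢ EE := by
      have hpr := Measure.prod_restrict (μ := μ.restrict EE) (ν := μ.restrict EE) EE EE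
      rw [Measure.restrict_restrict hEEmeas, inter_self] at hpr
      rw [hpr]
      exact ae_restrict_mem (hEEmeas.prod hEEmeas)
    filter_upwards [hmem] with p hp
    have h1 : f p.1 ∈ Icc aa (aa + L') := hp.1.2
    have h2 : f p.2 ∈ Icc aa (aa + L') := hp.2.2
    exact ENNReal.ofReal_le_ofReal (abs_sub_le_iff.2 ⟨by linarith [h1.2, h2.1], by linarith [h1.1, h2.2]⟩)
end

section
/- Let d ≥ 1 and let Ω : ℝ^d ∖ {0} → ℝ be bounded, measurable and homogeneous of degree zero (Ω(εx) = Ω(x) for all ε > 0 and x ≠ 0), and set K(x) = Ω(x)/|x|^d. Then there is a constant c_d depending only on d such that for all 0 < r < R, all points x₀ ∈ ℝ^d, all x, x' ∈ B(x₀, r), and every Euclidean ball B'' with B(x₀, R) ⊆ B'', one has ∫_{(x − B'') △ (x' − B'')} |K(y)| dy ≤ c_d · ‖Ω‖_∞ · r/(R − r), where x − B'' = {x − y : y ∈ B''} and △ denotes symmetric difference. -/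
open MeasureTheory Metric Set
open scoped ENNReal symmDiff


lemma pow_succ_sub_pow_succ_le (n : ℕ) {u v : ℝ} (hv : 0 ≤ v) (huv : v ≤ u) :
    u^(n+1) - v^(n+1) ≤ ((n:ℝ)+1) * u^n * (u - v) := by
  induction n with
  | zero => simp
  | succ k ih =>
    have hu : 0 ≤ u := le_trans hv huv
    have h2 : v^(k+1) ≤ u^(k+1) := pow_le_pow_left₀ hv huv _
    have h3 : u * (u^(k+1) - v^(k+1)) ≤ u * (((k:ℝ)+1) * u^k * (u - v)) :=
      mul_le_mul_of_nonneg_left ih hu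
    have h4 : u^(k+1+1) - v^(k+1+1) = u * (u^(k+1) - v^(k+1)) + v^(k+1) * (u - v) := by ring
    have h5 : u * (((k:ℝ)+1) * u^k * (u - v)) = ((k:ℝ)+1) * u^(k+1) * (u - v) := by ring
    have h6 : v^(k+1) * (u - v) ≤ u^(k+1) * (u - v) :=
      mul_le_mul_of_nonneg_right h2 (sub_nonneg.2 huv)
    push_cast
    linarith


set_option maxHeartbeats 2000000 in
set_option maxHeartbeats 2000000 in

lemma fubini_core (n : ℕ) (α ρ δ t : ℝ) (hδ : 0 < δ) (hδρ : δ ≤ ρ/4) (ht : 0 < t)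
    (ht2 : t ≤ ρ/2) (hα : ρ/4 ≤ α) :
    volume {y : EuclideanSpace ℝ (Fin (n+1)) |
        (ρ - δ ≤ dist y (α • EuclideanSpace.single 0 1) ∧
          dist y (α • EuclideanSpace.single 0 1) ≤ ρ + δ) ∧ ‖y‖ ≤ t}
      ≤ ENNReal.ofReal (16 * 2^n * δ * t^n) := by
  have hρ : 0 < ρ := by linarith
  set c : EuclideanSpace ℝ (Fin (n+1)) := α • EuclideanSpace.single 0 1 with hc
  set S : Set (EuclideanSpace ℝ (Fin (n+1))) :=
    {y | (ρ - δ ≤ dist y c ∧ dist y c ≤ ρ + δ) ∧ ‖y‖ ≤ t} with hS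
  have hSm : MeasurableSet S := by
    apply MeasurableSet.inter
    · exact MeasurableSet.inter
        (measurableSet_le measurable_const (measurable_id.dist measurable_const))
        (measurableSet_le (measurable_id.dist measurable_const) measurable_const)
    · exact measurableSet_le measurable_id.norm measurable_const
  set e1 := (MeasurableEquiv.toLp 2 (Fin (n+1) → ℝ)).symm with he1
  set e2 := MeasurableEquiv.piFinSuccAbove (fun _ : Fin (n+1) => ℝ) 0 with he2
  have h1 : volume (e1.symm ⁻¹' S) = volume S :=
    ((EuclideanSpace.volume_preserving_symm_measurableEquiv_toLp _).symm e1).measure_preimage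
      hSm.nullMeasurableSet
  have hTm : MeasurableSet (e1.symm ⁻¹' S) := e1.symm.measurable hSm
  have h2 : volume (e2.symm ⁻¹' (e1.symm ⁻¹' S)) = volume (e1.symm ⁻¹' S) :=
    ((MeasureTheory.volume_preserving_piFinSuccAbove (fun _ : Fin (n+1) => ℝ) 0).symm e2).measure_preimage
      hTm.nullMeasurableSet
  set G : Set (ℝ × (Fin n → ℝ)) :=
    {p | (∑ j, (p.2 j)^2 ≤ t^2) ∧ (ρ-δ)^2 - ∑ j, (p.2 j)^2 ≤ (p.1 - α)^2 ∧
          (p.1-α)^2 ≤ (ρ+δ)^2 - ∑ j, (p.2 j)^2} with hG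
  have hGm : MeasurableSet G := by
    have hq : Measurable (fun p : ℝ × (Fin n → ℝ) => ∑ j, (p.2 j)^2) := by
      apply Finset.measurable_sum
      intro j _
      exact ((measurable_pi_apply j).comp measurable_snd).pow_const 2
    have hs : Measurable (fun p : ℝ × (Fin n → ℝ) => (p.1 - α)^2) :=
      (measurable_fst.sub measurable_const).pow_const 2
    exact (measurableSet_le hq measurable_const).inter
      ((measurableSet_le (measurable_const.sub hq) hs).inter
        (measurableSet_le hs (measurable_const.sub hq)))
  have hsub : (⇑e2.symm ⁻¹' (⇑e1.symm ⁻¹' S)) ⊆ G := by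
    rintro ⟨s, w⟩ hp
    set y : EuclideanSpace ℝ (Fin (n+1)) := e1.symm (e2.symm (s, w)) with hy
    have hy0 : y 0 = s := by
      simp only [hy, he1, he2, MeasurableEquiv.piFinSuccAbove, Fin.consEquiv]
      exact congrFun rfl _
    have hysucc : ∀ j : Fin n, y (Fin.succ j) = w j := by
      intro j
      simp only [hy, he1, he2, MeasurableEquiv.piFinSuccAbove, Fin.consEquiv]
      exact congrFun rfl _
    obtain ⟨⟨hd1, hd2⟩, hn1⟩ := hp
    have hc0 : c 0 = α := by simp [hc, EuclideanSpace.single_apply]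
    have hcsucc : ∀ j : Fin n, c (Fin.succ j) = 0 := by
      intro j; simp [hc, EuclideanSpace.single_apply, Fin.succ_ne_zero]
    have hdist : dist y c ^ 2 = (s - α)^2 + ∑ j, (w j)^2 := by
      rw [EuclideanSpace.dist_eq, Real.sq_sqrt (by positivity)]
      rw [Fin.sum_univ_succAbove (fun i => dist (y i) (c i) ^ 2) 0]
      simp only [Fin.succAbove_zero, Real.dist_eq, sq_abs, hy0, hc0, hysucc, hcsucc, sub_zero]
    have hnorm : ‖y‖ ^ 2 = s^2 + ∑ j, (w j)^2 := by
      rw [EuclideanSpace.norm_eq, Real.sq_sqrt (by positivity)]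
      rw [Fin.sum_univ_succAbove (fun i => ‖y i‖ ^ 2) 0]
      simp only [Fin.succAbove_zero, Real.norm_eq_abs, sq_abs, hy0, hysucc]
    have hd0 : (0:ℝ) ≤ dist y c := dist_nonneg
    have hρδ : (0:ℝ) ≤ ρ - δ := by linarith
    have h1' : (ρ - δ)^2 ≤ dist y c ^ 2 := by nlinarith
    have h2' : dist y c ^ 2 ≤ (ρ + δ)^2 := by nlinarith
    have h3' : ‖y‖^2 ≤ t^2 := by nlinarith [norm_nonneg y]
    refine ⟨?_, ?_, ?_⟩
    · simp only [hG, mem_setOf_eq] at *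
      nlinarith [sq_nonneg s]
    · simp only [hG, mem_setOf_eq]; rw [hdist] at h1'; linarith
    · simp only [hG, mem_setOf_eq]; rw [hdist] at h2'; linarith
  have hslice : ∀ w : Fin n → ℝ,
      volume ((fun s => (s, w)) ⁻¹' G) ≤
        indicator {w : Fin n → ℝ | ∑ j, (w j)^2 ≤ t^2} (fun _ => ENNReal.ofReal (8*δ)) w := by
    intro w
    by_cases hq : w ∈ {w : Fin n → ℝ | ∑ j, (w j)^2 ≤ t^2}
    · rw [indicator_of_mem hq]
      simp only [mem_setOf_eq] at hq
      set q := ∑ j, (w j)^2 with hqdef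
      set A := (ρ-δ)^2 - q with hAdef
      set B := (ρ+δ)^2 - q with hBdef
      have hq0 : (0:ℝ) ≤ q := Finset.sum_nonneg fun j _ => sq_nonneg _
      have hA4 : (ρ/2)^2 ≤ A := by nlinarith
      have hA0 : (0:ℝ) ≤ A := le_trans (by positivity) hA4
      have hB0 : (0:ℝ) ≤ B := by nlinarith
      have hsA : ρ/2 ≤ Real.sqrt A := by
        rw [show ρ/2 = Real.sqrt ((ρ/2)^2) from (Real.sqrt_sq (by linarith)).symm]
        exact Real.sqrt_le_sqrt hA4
      have hBA : Real.sqrt B - Real.sqrt A ≤ 4*δ := by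
        have hle : B ≤ (Real.sqrt A + 4*δ)^2 := by
          nlinarith [Real.sq_sqrt hA0]
        have h2 := Real.sqrt_le_sqrt hle
        rw [Real.sqrt_sq (by positivity)] at h2
        linarith
      have hsubI : (fun s => (s, w)) ⁻¹' G ⊆
          Icc (α - Real.sqrt B) (α - Real.sqrt A) ∪ Icc (α + Real.sqrt A) (α + Real.sqrt B) := by
        intro s hs
        obtain ⟨-, h1, h2⟩ := hs
        have habs1 : Real.sqrt A ≤ |s - α| := by
          rw [show |s - α| = Real.sqrt ((s-α)^2) from (Real.sqrt_sq_eq_abs _).symm]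
          exact Real.sqrt_le_sqrt h1
        have habs2 : |s - α| ≤ Real.sqrt B := by
          rw [show |s - α| = Real.sqrt ((s-α)^2) from (Real.sqrt_sq_eq_abs _).symm]
          exact Real.sqrt_le_sqrt h2
        rcases le_or_gt α s with h | h
        · right
          rw [abs_of_nonneg (by linarith)] at habs1 habs2
          exact ⟨by linarith, by linarith⟩
        · left
          rw [abs_of_neg (by linarith)] at habs1 habs2
          exact ⟨by linarith, by linarith⟩
      calc volume ((fun s => (s, w)) ⁻¹' G)
          ≤ volume (Icc (α - Real.sqrt B) (α - Real.sqrt A) ∪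
              Icc (α + Real.sqrt A) (α + Real.sqrt B)) := measure_mono hsubI
        _ ≤ volume (Icc (α - Real.sqrt B) (α - Real.sqrt A)) +
              volume (Icc (α + Real.sqrt A) (α + Real.sqrt B)) := measure_union_le _ _
        _ = ENNReal.ofReal (Real.sqrt B - Real.sqrt A) +
              ENNReal.ofReal (Real.sqrt B - Real.sqrt A) := by
            rw [Real.volume_Icc, Real.volume_Icc]
            ring_nf
        _ ≤ ENNReal.ofReal (4*δ) + ENNReal.ofReal (4*δ) :=
            add_le_add (ENNReal.ofReal_le_ofReal hBA) (ENNReal.ofReal_le_ofReal hBA)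
        _ = ENNReal.ofReal (8*δ) := by
            rw [← ENNReal.ofReal_add (by positivity) (by positivity)]
            ring_nf
    · rw [indicator_of_notMem hq]
      have hempty : (fun s => (s, w)) ⁻¹' G = ∅ :=
        eq_empty_of_forall_notMem fun s hs => hq hs.1
      simp [hempty]
  have hWm : MeasurableSet {w : Fin n → ℝ | ∑ j, (w j)^2 ≤ t^2} :=
    measurableSet_le (Finset.measurable_sum _ fun j _ => (measurable_pi_apply j).pow_const 2)
      measurable_const
  have hGvol : volume G ≤
      ENNReal.ofReal (8*δ) * volume {w : Fin n → ℝ | ∑ j, (w j)^2 ≤ t^2} := by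
    rw [Measure.volume_eq_prod, Measure.prod_apply_symm hGm]
    calc ∫⁻ w, volume ((fun s => (s, w)) ⁻¹' G)
        ≤ ∫⁻ w, indicator {w : Fin n → ℝ | ∑ j, (w j)^2 ≤ t^2}
            (fun _ => ENNReal.ofReal (8*δ)) w := lintegral_mono hslice
      _ = ENNReal.ofReal (8*δ) * volume {w : Fin n → ℝ | ∑ j, (w j)^2 ≤ t^2} := by
          rw [lintegral_indicator hWm, setLIntegral_const]
  have hWvol : volume {w : Fin n → ℝ | ∑ j, (w j)^2 ≤ t^2} ≤ ENNReal.ofReal ((2*t)^n) := by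
    have hsub2 : {w : Fin n → ℝ | ∑ j, (w j)^2 ≤ t^2} ⊆
        Set.pi univ (fun _ => Icc (-t) t) := by
      intro w hw j _
      have h1 : (w j)^2 ≤ t^2 :=
        le_trans (Finset.single_le_sum (fun j _ => sq_nonneg (w j)) (Finset.mem_univ j)) hw
      constructor
      · nlinarith [sq_nonneg (w j + t)]
      · nlinarith [sq_nonneg (w j - t)]
    calc volume {w : Fin n → ℝ | ∑ j, (w j)^2 ≤ t^2}
        ≤ volume (Set.pi univ (fun _ : Fin n => Icc (-t) t)) := measure_mono hsub2
      _ = ∏ _j : Fin n, volume (Icc (-t) t) := volume_pi_pi _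
      _ = ENNReal.ofReal (2*t) ^ n := by
          rw [Real.volume_Icc, Finset.prod_const]
          norm_num [sub_neg_eq_add, two_mul]
      _ = ENNReal.ofReal ((2*t)^n) := (ENNReal.ofReal_pow (by positivity) n).symm
  calc volume S = volume (⇑e2.symm ⁻¹' (⇑e1.symm ⁻¹' S)) := by rw [h2, h1]
    _ ≤ volume G := measure_mono hsub
    _ ≤ ENNReal.ofReal (8*δ) * volume {w : Fin n → ℝ | ∑ j, (w j)^2 ≤ t^2} := hGvol
    _ ≤ ENNReal.ofReal (8*δ) * ENNReal.ofReal ((2*t)^n) := mul_le_mul_right hWvol _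
    _ = ENNReal.ofReal (8*δ * (2*t)^n) := (ENNReal.ofReal_mul (by positivity)).symm
    _ ≤ ENNReal.ofReal (16 * 2^n * δ * t^n) := by
        apply ENNReal.ofReal_le_ofReal
        rw [mul_pow]
        nlinarith [mul_nonneg (mul_nonneg (pow_nonneg (by norm_num : (0:ℝ) ≤ 2) n) hδ.le)
          (pow_nonneg ht.le n)]

lemma annulus_cap_bound (n : ℕ) (a : EuclideanSpace ℝ (Fin (n+1))) {ρ δ t : ℝ}
    (hρ : 0 < ρ) (hδ : 0 < δ) (hδρ : δ ≤ 2*ρ) (ht : 0 < t) :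
    volume {y : EuclideanSpace ℝ (Fin (n+1)) |
        (ρ - δ ≤ dist y a ∧ dist y a ≤ ρ + δ) ∧ ‖y‖ ≤ t}
      ≤ ENNReal.ofReal (((2*((n:ℝ)+1)*6^n + 3*6^n + 2) *
          (volume (ball (0:EuclideanSpace ℝ (Fin (n+1))) 1)).toReal + 16*2^n) * δ * t^n) := by
  set ω : ℝ≥0∞ := volume (ball (0:EuclideanSpace ℝ (Fin (n+1))) 1) with hω
  have hωtop : ω ≠ ⊤ := measure_ball_lt_top.ne
  set ωr : ℝ := ω.toReal with hωr
  have hωr0 : 0 ≤ ωr := ENNReal.toReal_nonneg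
  have hωeq : ω = ENNReal.ofReal ωr := (ENNReal.ofReal_toReal hωtop).symm
  set Creal : ℝ := (2*((n:ℝ)+1)*6^n + 3*6^n + 2) * ωr + 16*2^n with hCreal
  have hexp : Creal = 2*((n:ℝ)+1)*6^n*ωr + 3*6^n*ωr + 2*ωr + 16*2^n := by
    rw [hCreal]; ring
  have p1 : (0:ℝ) ≤ 2*((n:ℝ)+1)*6^n*ωr := by positivity
  have p2 : (0:ℝ) ≤ 3*6^n*ωr := by positivity
  have p3 : (0:ℝ) ≤ 2*ωr := by positivity
  have p4 : (0:ℝ) ≤ 16*2^n := by positivity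
  have hcoef : ∀ u : ℝ, u ≤ Creal → u * δ * t^n ≤ Creal * δ * t^n := by
    intro u huv
    exact mul_le_mul_of_nonneg_right (mul_le_mul_of_nonneg_right huv hδ.le)
      (pow_nonneg ht.le n)
  set S : Set (EuclideanSpace ℝ (Fin (n+1))) :=
    {y | (ρ - δ ≤ dist y a ∧ dist y a ≤ ρ + δ) ∧ ‖y‖ ≤ t} with hS
  have hpow6 : ∀ u : ℝ, 0 ≤ u → u ≤ 6*t → u^n ≤ (6*t)^n := fun u hu hut =>
    pow_le_pow_left₀ hu hut n
  have h2p : ((6:ℝ)*t)^n = 6^n * t^n := mul_pow 6 t n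
  rcases le_or_gt (ρ/2) t with hcase1 | hcase2
  · rcases le_or_gt (ρ/2) δ with hcase1a | hcase1b
    · -- fat annulus: use the whole ball of radius ρ+δ
      have hsub : S ⊆ closedBall a (ρ+δ) := fun y hy => mem_closedBall.2 hy.1.2
      calc volume S ≤ volume (closedBall a (ρ+δ)) := measure_mono hsub
        _ = ENNReal.ofReal ((ρ+δ)^(n+1)) * ENNReal.ofReal ωr := by
            rw [Measure.addHaar_closedBall volume a (by linarith), ← hωeq]
            simp [finrank_euclideanSpace_fin, hω]
        _ = ENNReal.ofReal ((ρ+δ)^(n+1) * ωr) := (ENNReal.ofReal_mul (by positivity)).symm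
        _ ≤ ENNReal.ofReal (Creal * δ * t^n) := by
            apply ENNReal.ofReal_le_ofReal
            have h1 : (ρ+δ)^(n+1) ≤ (6*t)^n * (3*δ) := by
              have ha1 : ρ + δ ≤ 6*t := by linarith
              have ha2 : ρ + δ ≤ 3*δ := by linarith
              calc (ρ+δ)^(n+1) = (ρ+δ)^n * (ρ+δ) := by ring
                _ ≤ (6*t)^n * (3*δ) :=
                  mul_le_mul (hpow6 _ (by linarith) ha1) ha2 (by linarith) (by positivity)
            calc (ρ+δ)^(n+1) * ωr ≤ (6*t)^n * (3*δ) * ωr :=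
                  mul_le_mul_of_nonneg_right h1 hωr0
              _ = (3*6^n*ωr) * δ * t^n := by rw [h2p]; ring
              _ ≤ Creal * δ * t^n := hcoef _ (by linarith)
    · -- thin annulus
      have hsub : S ⊆ closedBall a (ρ+δ) \ ball a (ρ-δ) := by
        intro y hy
        exact ⟨mem_closedBall.2 hy.1.2, fun hmem => absurd hy.1.1 (by
          simp only [mem_ball] at hmem; linarith)⟩
      have hvol1 : volume (closedBall a (ρ+δ)) = ENNReal.ofReal ((ρ+δ)^(n+1)) * ω := by
        rw [Measure.addHaar_closedBall volume a (by linarith)]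
        simp [finrank_euclideanSpace_fin, hω]
      have hvol2 : volume (ball a (ρ-δ)) = ENNReal.ofReal ((ρ-δ)^(n+1)) * ω := by
        rw [Measure.addHaar_ball volume a (by linarith)]
        simp [finrank_euclideanSpace_fin, hω]
      have hdiff : volume (closedBall a (ρ+δ) \ ball a (ρ-δ)) =
          volume (closedBall a (ρ+δ)) - volume (ball a (ρ-δ)) :=
        measure_diff (ball_subset_closedBall.trans (closedBall_subset_closedBall (by linarith)))
          measurableSet_ball.nullMeasurableSet measure_ball_lt_top.ne
      have hnn1 : (0:ℝ) ≤ (ρ+δ)^(n+1) := pow_nonneg (by linarith) _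
      have hnn2 : (0:ℝ) ≤ (ρ-δ)^(n+1) := pow_nonneg (by linarith) _
      calc volume S ≤ volume (closedBall a (ρ+δ) \ ball a (ρ-δ)) := measure_mono hsub
        _ = ENNReal.ofReal ((ρ+δ)^(n+1) * ωr) - ENNReal.ofReal ((ρ-δ)^(n+1) * ωr) := by
            rw [hdiff, hvol1, hvol2, hωeq, ← ENNReal.ofReal_mul hnn1,
              ← ENNReal.ofReal_mul hnn2]
        _ = ENNReal.ofReal ((ρ+δ)^(n+1) * ωr - (ρ-δ)^(n+1) * ωr) :=
            (ENNReal.ofReal_sub _ (mul_nonneg hnn2 hωr0)).symm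
        _ ≤ ENNReal.ofReal (Creal * δ * t^n) := by
            apply ENNReal.ofReal_le_ofReal
            have hkey : (ρ+δ)^(n+1) - (ρ-δ)^(n+1) ≤ ((n:ℝ)+1) * (6*t)^n * (2*δ) := by
              have hbase := pow_succ_sub_pow_succ_le n (by linarith : (0:ℝ) ≤ ρ-δ)
                (by linarith : ρ-δ ≤ ρ+δ)
              have h1 : (ρ+δ)^n ≤ (6*t)^n := hpow6 _ (by linarith) (by linarith)
              have hmono : ((n:ℝ)+1) * (ρ+δ)^n * ((ρ+δ) - (ρ-δ)) ≤
                  ((n:ℝ)+1) * (6*t)^n * (2*δ) := by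
                rw [show (ρ+δ) - (ρ-δ) = 2*δ by ring]
                exact mul_le_mul_of_nonneg_right
                  (mul_le_mul_of_nonneg_left h1 (by positivity)) (by linarith)
              linarith
            calc (ρ+δ)^(n+1) * ωr - (ρ-δ)^(n+1) * ωr
                = ((ρ+δ)^(n+1) - (ρ-δ)^(n+1)) * ωr := by ring
              _ ≤ ((n:ℝ)+1) * (6*t)^n * (2*δ) * ωr := mul_le_mul_of_nonneg_right hkey hωr0
              _ = (2*((n:ℝ)+1)*6^n*ωr) * δ * t^n := by rw [h2p]; ring
              _ ≤ Creal * δ * t^n := hcoef _ (by linarith)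
  · rcases lt_or_ge (ρ/4) δ with hcase2a | hcase2b
    · -- big δ: use ball of radius t
      have hsub : S ⊆ closedBall (0:EuclideanSpace ℝ (Fin (n+1))) t := fun y hy =>
        mem_closedBall_zero_iff.2 hy.2
      calc volume S ≤ volume (closedBall (0:EuclideanSpace ℝ (Fin (n+1))) t) :=
            measure_mono hsub
        _ = ENNReal.ofReal (t^(n+1)) * ENNReal.ofReal ωr := by
            rw [Measure.addHaar_closedBall volume _ ht.le, ← hωeq]
            simp [finrank_euclideanSpace_fin, hω]
        _ = ENNReal.ofReal (t^(n+1) * ωr) := (ENNReal.ofReal_mul (by positivity)).symm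
        _ ≤ ENNReal.ofReal (Creal * δ * t^n) := by
            apply ENNReal.ofReal_le_ofReal
            have h2 : t ≤ 2*δ := by linarith
            calc t^(n+1) * ωr = t * (t^n * ωr) := by ring
              _ ≤ 2*δ * (t^n * ωr) := mul_le_mul_of_nonneg_right h2 (by positivity)
              _ = (2*ωr) * δ * t^n := by ring
              _ ≤ Creal * δ * t^n := hcoef _ (by linarith)
    · -- main case: Fubini via rotation
      rcases eq_empty_or_nonempty S with hSe | ⟨y₀, hy₀⟩
      · rw [hSe]
        simp
      · have hα : ρ/4 ≤ ‖a‖ := by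
          have h1 : ρ - δ ≤ dist y₀ a := hy₀.1.1
          have h2 : ‖y₀‖ ≤ t := hy₀.2
          have h3 : dist y₀ a ≤ ‖y₀‖ + ‖a‖ := by
            rw [dist_eq_norm]
            exact norm_sub_le _ _
          linarith
        set b : EuclideanSpace ℝ (Fin (n+1)) := ‖a‖ • EuclideanSpace.single 0 1 with hb
        have hnb : ‖b‖ = ‖a‖ := by
          rw [hb, norm_smul, EuclideanSpace.norm_single]
          simp [abs_of_nonneg (norm_nonneg a)]
        have hfub := fubini_core n ‖a‖ ρ δ t hδ hcase2b ht (by linarith) hα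
        have hconst : (16:ℝ) * 2^n * δ * t^n ≤ Creal * δ * t^n := hcoef _ (by linarith)
        have hSm : MeasurableSet S := by
          apply MeasurableSet.inter
          · exact MeasurableSet.inter
              (measurableSet_le measurable_const (measurable_id.dist measurable_const))
              (measurableSet_le (measurable_id.dist measurable_const) measurable_const)
          · exact measurableSet_le measurable_id.norm measurable_const
        by_cases hba : b = a
        · have : S = {y : EuclideanSpace ℝ (Fin (n+1)) |
              (ρ - δ ≤ dist y (‖a‖ • EuclideanSpace.single 0 1) ∧
                dist y (‖a‖ • EuclideanSpace.single 0 1) ≤ ρ + δ) ∧ ‖y‖ ≤ t} := by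
            rw [hS, ← hb, hba]
          rw [this]
          exact le_trans hfub (ENNReal.ofReal_le_ofReal (by linarith))
        · set L := Submodule.reflection (Submodule.span ℝ {b - a})ᗮ with hL
          have hLb : L b = a := Submodule.reflection_sub hnb
          have hpre : ⇑L ⁻¹' S = {y : EuclideanSpace ℝ (Fin (n+1)) |
              (ρ - δ ≤ dist y b ∧ dist y b ≤ ρ + δ) ∧ ‖y‖ ≤ t} := by
            ext y
            simp only [hS, mem_preimage, mem_setOf_eq]
            have hd : dist (L y) a = dist y b := by
              rw [← hLb, dist_eq_norm, dist_eq_norm, ← map_sub]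
              exact L.norm_map _
            rw [hd, L.norm_map y]
          have hvolpre : volume (⇑L ⁻¹' S) = volume S :=
            L.measurePreserving.measure_preimage hSm.nullMeasurableSet
          rw [← hvolpre, hpre, hb]
          exact le_trans hfub (ENNReal.ofReal_le_ofReal (by linarith))


lemma shell_algebra (n k : ℕ) (M C δ m : ℝ) (hm : 0 < m) :
    M * (((2:ℝ)^k*m)^(n+1))⁻¹ * (C * δ * ((2:ℝ)^(k+1)*m)^n) = (M*C*δ*2^n/m) * (2⁻¹)^k := by
  rw [mul_pow, mul_pow, ← pow_mul, ← pow_mul]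
  rw [show k*(n+1) = k*n + k by ring, show (k+1)*n = k*n + n by ring, pow_add, pow_add]
  have h2kn : (0:ℝ) < 2^(k*n) := by positivity
  have h2k : (0:ℝ) < 2^k := by positivity
  rw [inv_pow]
  field_simp
  ring

lemma exists_dyadic (u : ℝ) (hu : 1 ≤ u) : ∃ k : ℕ, 2^k ≤ u ∧ u ≤ 2^(k+1) := by
  obtain ⟨N, hN⟩ := pow_unbounded_of_one_lt u (by norm_num : (1:ℝ) < 2)
  suffices H : ∀ N : ℕ, u < 2^N → ∃ k, (2:ℝ)^k ≤ u ∧ u ≤ 2^(k+1) from H N hN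
  intro N
  induction N with
  | zero => intro h; exact absurd hu (by simpa using h.not_ge)
  | succ m ih =>
    intro h
    rcases lt_or_ge u (2^m) with h' | h'
    · exact ih h'
    · exact ⟨m, h', h.le⟩

lemma image_sub_ball (n : ℕ) (x z : EuclideanSpace ℝ (Fin (n+1))) (ρ : ℝ) :
    (fun y => x - y) '' ball z ρ = ball (x - z) ρ := by
  ext w
  simp only [mem_image, mem_ball]
  constructor
  · rintro ⟨v, hv, rfl⟩
    rwa [dist_sub_left]
  · intro hw
    refine ⟨x - w, ?_, by abel⟩
    rwa [show dist (x - w) z = dist w (x - z) by rw [dist_comm, dist_eq_norm, dist_eq_norm]; congr 1; abel]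

lemma norm_add_le_of_ball_subset (n : ℕ) {z p x₀ : EuclideanSpace ℝ (Fin (n+1))} {R ρ : ℝ}
    (hsub : ball x₀ R ⊆ ball z ρ) (hp : dist p x₀ < R) :
    ‖p - z‖ + (R - dist p x₀) ≤ ρ := by
  have key : ∀ s : ℝ, 0 ≤ s → s < R - dist p x₀ → ‖p - z‖ + s < ρ := by
    intro s hs0 hs
    obtain ⟨u, hu1, hu2⟩ : ∃ u : EuclideanSpace ℝ (Fin (n+1)),
        ‖u‖ = 1 ∧ ‖p + s • u - z‖ = ‖p - z‖ + s := by
      by_cases hpz : p - z = 0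
      · refine ⟨EuclideanSpace.single 0 1, by simp [EuclideanSpace.norm_single], ?_⟩
        rw [show p + s • EuclideanSpace.single 0 1 - z = (p - z) + s • EuclideanSpace.single 0 1 by abel,
          hpz, zero_add, norm_smul, EuclideanSpace.norm_single]
        simp [abs_of_nonneg hs0, hpz]
      · set v := p - z with hv
        have hvn : 0 < ‖v‖ := norm_pos_iff.2 hpz
        refine ⟨‖v‖⁻¹ • v, by rw [norm_smul]; simp [abs_of_nonneg (inv_nonneg.2 hvn.le), inv_mul_cancel₀ hvn.ne'], ?_⟩
        have : p + s • (‖v‖⁻¹ • v) - z = (1 + s * ‖v‖⁻¹) • v := by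
          rw [smul_smul, add_smul, one_smul]
          abel_nf
          rw [hv]
          abel
        rw [this, norm_smul, Real.norm_eq_abs, abs_of_nonneg (by positivity)]
        field_simp
    have hmem : p + s • u ∈ ball x₀ R := by
      rw [mem_ball]
      calc dist (p + s • u) x₀ ≤ dist (p + s • u) p + dist p x₀ := dist_triangle _ _ _
        _ = s + dist p x₀ := by
            rw [dist_eq_norm, show p + s • u - p = s • u by abel, norm_smul, hu1]
            simp [abs_of_nonneg hs0]
        _ < R := by linarith
    have := hsub hmem
    rw [mem_ball, dist_eq_norm, hu2] at this
    linarith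
  by_contra hcon
  push_neg at hcon
  set m' := R - dist p x₀ with hm'
  have hm'0 : 0 < m' := by rw [hm']; linarith
  set ε := ‖p - z‖ + m' - ρ with hε
  have hε0 : 0 < ε := by rw [hε]; linarith
  rcases le_or_gt m' (ε/2) with hc | hc
  · have := key 0 le_rfl hm'0
    linarith
  · have := key (m' - ε/2) (by linarith) (by linarith)
    linarith

theorem homogeneous_kernel_symmDiff_bound (d : ℕ) (hd : 1 ≤ d) :
    ∃ c : ℝ, 0 < c ∧
      ∀ (Ω : EuclideanSpace ℝ (Fin d) → ℝ) (M : ℝ),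
        Measurable Ω →
        (∀ x : EuclideanSpace ℝ (Fin d), x ≠ 0 → |Ω x| ≤ M) →
        (∀ (ε : ℝ) (x : EuclideanSpace ℝ (Fin d)), 0 < ε → x ≠ 0 → Ω (ε • x) = Ω x) →
        ∀ (x₀ : EuclideanSpace ℝ (Fin d)) (r R : ℝ), 0 < r → r < R →
          ∀ x ∈ ball x₀ r, ∀ x' ∈ ball x₀ r,
            ∀ (z : EuclideanSpace ℝ (Fin d)) (ρ : ℝ), ball x₀ R ⊆ ball z ρ →
              (∫⁻ y in
                  ((fun y => x - y) '' ball z ρ) ∆ ((fun y => x' - y) '' ball z ρ),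
                  ENNReal.ofReal |Ω y / ‖y‖ ^ d|) ≤
                ENNReal.ofReal (c * M * r / (R - r)) := by
  obtain ⟨n, rfl⟩ : ∃ n, d = n + 1 := ⟨d - 1, (Nat.succ_pred_eq_of_pos hd).symm⟩
  set ωr : ℝ := (volume (ball (0:EuclideanSpace ℝ (Fin (n+1))) 1)).toReal with hωr
  have hωr0 : 0 ≤ ωr := ENNReal.toReal_nonneg
  set Creal : ℝ := (2*((n:ℝ)+1)*6^n + 3*6^n + 2) * ωr + 16*2^n with hCreal
  have hC0 : 0 < Creal := by
    have h1 : (0:ℝ) ≤ (2*((n:ℝ)+1)*6^n + 3*6^n + 2) * ωr := by positivity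
    have h2 : (0:ℝ) < 16*2^n := by positivity
    linarith
  refine ⟨2^(n+2) * Creal, by positivity, ?_⟩
  intro Ω M _hmeas hbound _hhom x₀ r R hr hrR x hx x' hx' z ρ hsub
  set m : ℝ := R - r with hm
  have hm0 : 0 < m := by rw [hm]; linarith
  have hM0 : 0 ≤ M := by
    refine le_trans (abs_nonneg _) (hbound (EuclideanSpace.single 0 1) ?_)
    intro h
    have := EuclideanSpace.norm_single (𝕜 := ℝ) (0 : Fin (n+1)) 1
    rw [h] at this
    simp at this
  rw [image_sub_ball n x z ρ, image_sub_ball n x' z ρ]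
  by_cases hxx : x = x'
  · subst hxx
    rw [symmDiff_self, Set.bot_eq_empty, Measure.restrict_empty, lintegral_zero_measure]
    exact zero_le
  · set a : EuclideanSpace ℝ (Fin (n+1)) := x - z with ha
    set b : EuclideanSpace ℝ (Fin (n+1)) := x' - z with hb
    set δ : ℝ := dist x x' with hδ
    have hδ0 : 0 < δ := dist_pos.2 hxx
    have hδ2r : δ < 2*r := by
      rw [hδ]
      calc dist x x' ≤ dist x x₀ + dist x₀ x' := dist_triangle _ _ _
        _ < r + r := add_lt_add (mem_ball.1 hx) (by rw [dist_comm]; exact mem_ball.1 hx')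
        _ = 2*r := by ring
    have hxR : dist x x₀ < R := lt_trans (mem_ball.1 hx) hrR
    have hx'R : dist x' x₀ < R := lt_trans (mem_ball.1 hx') hrR
    have hanorm : ‖a‖ + m ≤ ρ := by
      have := norm_add_le_of_ball_subset n hsub hxR
      have h2 : m ≤ R - dist x x₀ := by
        rw [hm]
        have := mem_ball.1 hx
        linarith
      rw [ha]; linarith
    have hbnorm : ‖b‖ + m ≤ ρ := by
      have := norm_add_le_of_ball_subset n hsub hx'R
      have h2 : m ≤ R - dist x' x₀ := by
        rw [hm]
        have := mem_ball.1 hx'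
        linarith
      rw [hb]; linarith
    have hρR : R ≤ ρ := by
      have := norm_add_le_of_ball_subset n hsub (show dist x₀ x₀ < R by simp; linarith)
      simp only [dist_self, sub_zero] at this
      have := le_trans (by linarith [norm_nonneg (x₀ - z)]) this
      linarith [norm_nonneg (x₀ - z)]
    have hρ0 : 0 < ρ := lt_of_lt_of_le (by linarith) hρR
    have hδ2ρ : δ ≤ 2*ρ := by linarith
    have hab : dist a b = δ := by rw [ha, hb, hδ, dist_sub_right]
    set S : Set (EuclideanSpace ℝ (Fin (n+1))) := ball a ρ ∆ ball b ρ with hS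
    have hSprop : ∀ y ∈ S, (ρ - δ ≤ dist y a ∧ dist y a ≤ ρ + δ) ∧ m ≤ ‖y‖ := by
      intro y hy
      rw [hS, Set.mem_symmDiff] at hy
      rcases hy with ⟨hin, hout⟩ | ⟨hin, hout⟩
      · rw [mem_ball] at hin hout
        push_neg at hout
        have ht1 : dist y b ≤ dist y a + dist a b := dist_triangle _ _ _
        have hyb : ρ ≤ dist y b := hout
        have hyn : ρ ≤ ‖y‖ + ‖b‖ := le_trans hyb (by
          rw [dist_eq_norm]; exact norm_sub_le _ _)
        exact ⟨⟨by rw [hab] at ht1; linarith, by linarith⟩, by linarith⟩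
      · rw [mem_ball] at hin hout
        push_neg at hout
        have ht1 : dist y a ≤ dist y b + dist b a := dist_triangle _ _ _
        have hba' : dist b a = δ := by rw [dist_comm]; exact hab
        have hya : ρ ≤ dist y a := hout
        have hyn : ρ ≤ ‖y‖ + ‖a‖ := le_trans hya (by
          rw [dist_eq_norm]; exact norm_sub_le _ _)
        exact ⟨⟨by linarith, by rw [hba'] at ht1; linarith⟩, by linarith⟩
    set T : ℕ → Set (EuclideanSpace ℝ (Fin (n+1))) := fun k =>
      S ∩ {y | 2^k * m ≤ ‖y‖ ∧ ‖y‖ ≤ 2^(k+1) * m} with hT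
    have hcover : S ⊆ ⋃ k, T k := by
      intro y hy
      have hym : m ≤ ‖y‖ := (hSprop y hy).2
      obtain ⟨k, hk1, hk2⟩ := exists_dyadic (‖y‖/m) ((one_le_div hm0).2 hym)
      exact mem_iUnion.2 ⟨k, hy, (le_div_iff₀ hm0).1 hk1, (div_le_iff₀ hm0).1 hk2⟩
    set K : ℝ := M * Creal * δ * 2^n / m with hK
    have hK0 : 0 ≤ K := by
      rw [hK]
      have : (0:ℝ) ≤ M * Creal * δ * 2^n := by positivity
      positivity
    calc ∫⁻ y in S, ENNReal.ofReal |Ω y / ‖y‖ ^ (n+1)|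
        ≤ ∫⁻ y in ⋃ k, T k, ENNReal.ofReal |Ω y / ‖y‖ ^ (n+1)| := lintegral_mono_set hcover
      _ ≤ ∑' k, ∫⁻ y in T k, ENNReal.ofReal |Ω y / ‖y‖ ^ (n+1)| := lintegral_iUnion_le _ _
      _ ≤ ∑' k, ENNReal.ofReal (K * (2⁻¹)^k) := by
          apply ENNReal.tsum_le_tsum
          intro k
          have h2k1 : (0:ℝ) < 2^k * m := by positivity
          have hCk0 : (0:ℝ) ≤ M * (((2:ℝ)^k*m)^(n+1))⁻¹ := by positivity
          calc ∫⁻ y in T k, ENNReal.ofReal |Ω y / ‖y‖ ^ (n+1)|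
              ≤ ∫⁻ _y in T k, ENNReal.ofReal (M * (((2:ℝ)^k*m)^(n+1))⁻¹) := by
                apply setLIntegral_mono measurable_const
                intro y hy
                apply ENNReal.ofReal_le_ofReal
                have hy1 : 2^k * m ≤ ‖y‖ := hy.2.1
                have hyne : y ≠ 0 := by
                  intro h0
                  rw [h0, norm_zero] at hy1
                  linarith
                have hΩ := hbound y hyne
                rw [abs_div, abs_of_nonneg (by positivity : (0:ℝ) ≤ ‖y‖^(n+1))]
                rw [div_eq_mul_inv]
                apply mul_le_mul hΩ _ (by positivity) hM0
                apply inv_anti₀ (by positivity)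
                exact pow_le_pow_left₀ (by positivity) hy1 _
            _ = ENNReal.ofReal (M * (((2:ℝ)^k*m)^(n+1))⁻¹) * volume (T k) :=
                setLIntegral_const _ _
            _ ≤ ENNReal.ofReal (M * (((2:ℝ)^k*m)^(n+1))⁻¹) *
                ENNReal.ofReal (Creal * δ * (2^(k+1)*m)^n) := by
                apply mul_le_mul_right
                have hTsub : T k ⊆ {y : EuclideanSpace ℝ (Fin (n+1)) |
                    (ρ - δ ≤ dist y a ∧ dist y a ≤ ρ + δ) ∧ ‖y‖ ≤ 2^(k+1)*m} := by
                  intro y hy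
                  exact ⟨(hSprop y hy.1).1, hy.2.2⟩
                exact le_trans (measure_mono hTsub)
                  (annulus_cap_bound n a hρ0 hδ0 hδ2ρ (by positivity))
            _ = ENNReal.ofReal (K * (2⁻¹)^k) := by
                rw [← ENNReal.ofReal_mul hCk0, hK, shell_algebra n k M Creal δ m hm0]
      _ = ENNReal.ofReal (K * (1 - 2⁻¹)⁻¹) := by
          rw [← ENNReal.ofReal_tsum_of_nonneg (fun k => by positivity)
            ((summable_geometric_of_lt_one (by norm_num) (by norm_num)).mul_left K)]
          congr 1
          rw [tsum_mul_left, tsum_geometric_of_lt_one (by norm_num) (by norm_num)]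
      _ ≤ ENNReal.ofReal (2^(n+2) * Creal * M * r / (R - r)) := by
          apply ENNReal.ofReal_le_ofReal
          rw [hK]
          have hgoal : M * Creal * δ * 2^n * (1 - 2⁻¹)⁻¹ ≤ 2^(n+2) * Creal * M * r := by
            have hbase : (0:ℝ) ≤ M * Creal * 2^n := by positivity
            have h1 : M * Creal * 2^n * δ ≤ M * Creal * 2^n * (2*r) :=
              mul_le_mul_of_nonneg_left hδ2r.le hbase
            have h2 : ((2:ℝ))^(n+2) = 2^n * 4 := by rw [pow_add]; norm_num
            rw [h2]
            have h3 : ((1:ℝ) - 2⁻¹)⁻¹ = 2 := by norm_num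
            rw [h3]
            nlinarith
          rw [div_mul_eq_mul_div, hm]
          exact (div_le_div_iff_of_pos_right (show (0:ℝ) < R - r by linarith)).2 hgoal
end
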